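/- arXiv:1310.1312 — 4 statements merged into one kernel-verified Lean document; each statement's English description precedes it below -/
import Mathlib

section
/- For every n×n density matrix ρ, Q(ρ) ≤ ln n − C_n, and equality holds for the maximally mixed state: Q(I/n) = F(1/n, …, 1/n) = ln n − C_n. -/
open MeasureTheory Matrix
open scoped ComplexOrder

/-- η(y) = −y ln y (with ln 0 = 0 in Mathlib, so 0 ln 0 = 0). -/
noncomputable def eta (y : ℝ) : ℝ := -(y * Real.log y)

/-- C_n = 1/2 + 1/3 + ⋯ + 1/n (C_1 = 0). -/
noncomputable def harmC (n : ℕ) : ℝ := ∑ k ∈ Finset.Icc 2 n, (1 : ℝ) / k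

/-- Integral of a function over the probability simplex Δ_n with respect to the
normalized uniform measure dx = (n−1)! dx_1 ⋯ dx_{n−1}, realised in the coordinates
(x_1, …, x_{n−1}), with x_n = 1 − (x_1 + ⋯ + x_{n−1}). -/
noncomputable def simplexIntegral (n : ℕ) (f : (Fin n → ℝ) → ℝ) : ℝ :=
  ((n - 1).factorial : ℝ) *
    ∫ y in {y : Fin (n - 1) → ℝ | (∀ i, 0 ≤ y i) ∧ ∑ i, y i ≤ 1},
      f (fun i => if h : (i : ℕ) < n - 1 then y ⟨(i : ℕ), h⟩ else 1 - ∑ j, y j)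

/-- Subentropy of a probability vector: F(λ) = n ∫_{Δ_n} η(λ·x) dx − C_n. -/
noncomputable def subF (n : ℕ) (lam : Fin n → ℝ) : ℝ :=
  (n : ℝ) * simplexIntegral n (fun x => eta (∑ i, lam i * x i)) - harmC n

/-- Subentropy of a (Hermitian) matrix: Q(ρ) = F(λ(ρ)), the subentropy of its
eigenvalue vector (junk value 0 for non-Hermitian matrices). -/
noncomputable def Qmat {ι : Type} [Fintype ι] [DecidableEq ι] (ρ : Matrix ι ι ℂ) : ℝ :=
  if h : ρ.IsHermitian then
    subF (Fintype.card ι) (fun k => h.eigenvalues ((Fintype.equivFin ι).symm k))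
  else 0

/-- scaled simplex -/
def simS (m : ℕ) (c : ℝ) : Set (Fin m → ℝ) := {y | (∀ i, 0 ≤ y i) ∧ ∑ i, y i ≤ c}

lemma isClosed_simS (m : ℕ) (c : ℝ) : IsClosed (simS m c) := by
  have h1 : IsClosed {y : Fin m → ℝ | ∀ i, 0 ≤ y i} := by
    have : {y : Fin m → ℝ | ∀ i, 0 ≤ y i} = ⋂ i, {y | 0 ≤ y i} := by
      ext y; simp
    rw [this]
    exact isClosed_iInter fun i => isClosed_le continuous_const (continuous_apply i)
  have h2 : IsClosed {y : Fin m → ℝ | ∑ i, y i ≤ c} :=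
    isClosed_le (by continuity) continuous_const
  exact h1.inter h2

lemma measurableSet_simS (m : ℕ) (c : ℝ) : MeasurableSet (simS m c) :=
  (isClosed_simS m c).measurableSet

lemma slice_simS (m : ℕ) (c t : ℝ) :
    (fun y : Fin m → ℝ => Fin.cons t y ∈ simS (m+1) c) = fun y => (0 ≤ t ∧ y ∈ simS m (c - t)) := by
  funext y
  simp only [simS, Set.mem_setOf_eq, eq_iff_iff, Fin.sum_univ_succ, Fin.cons_zero, Fin.cons_succ,
    Fin.forall_fin_succ]
  constructor
  · rintro ⟨⟨h0, hi⟩, hs⟩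
    exact ⟨h0, hi, by linarith⟩
  · rintro ⟨h0, hi, hs⟩
    exact ⟨⟨h0, hi⟩, by linarith⟩

lemma volume_simS : ∀ (m : ℕ) (c : ℝ), 0 ≤ c →
    volume (simS m c) = ENNReal.ofReal (c ^ m / m.factorial) := by
  intro m
  induction m with
  | zero =>
    intro c hc
    have : simS 0 c = Set.univ := by
      ext y; simp [simS, hc]
    rw [this]
    rw [MeasureTheory.volume_pi, MeasureTheory.Measure.pi_univ]
    simp
  | succ m ih =>
    intro c hc
    have hmp := (volume_preserving_piFinSuccAbove (fun _ : Fin (m+1) => ℝ) 0).symm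
    have hpre : (MeasurableEquiv.piFinSuccAbove (fun _ : Fin (m+1) => ℝ) 0).symm ⁻¹' (simS (m+1) c)
        = {p : ℝ × (Fin m → ℝ) | 0 ≤ p.1 ∧ p.2 ∈ simS m (c - p.1)} := by
      ext ⟨t, y⟩
      have : (MeasurableEquiv.piFinSuccAbove (fun _ : Fin (m+1) => ℝ) 0).symm (t, y)
          = Fin.cons t y := by
        simp only [MeasurableEquiv.piFinSuccAbove, MeasurableEquiv.symm_mk,
          MeasurableEquiv.coe_mk, Equiv.symm_symm, Fin.insertNthEquiv_apply]
        exact Fin.insertNth_zero' t y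
      simp only [Set.mem_preimage, this, Set.mem_setOf_eq]
      exact iff_of_eq (congrFun (slice_simS m c t) y)
    have hvol : volume (simS (m+1) c)
        = (volume.prod volume) {p : ℝ × (Fin m → ℝ) | 0 ≤ p.1 ∧ p.2 ∈ simS m (c - p.1)} := by
      rw [← hpre]
      exact (hmp.measure_preimage (measurableSet_simS _ _).nullMeasurableSet).symm
    rw [hvol]
    set A : Set (ℝ × (Fin m → ℝ)) := {p | 0 ≤ p.1 ∧ p.2 ∈ simS m (c - p.1)} with hA
    have hclosed : IsClosed A := by
      have : A = {p : ℝ × (Fin m → ℝ) | 0 ≤ p.1} ∩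
          ((⋂ i, {p : ℝ × (Fin m → ℝ) | 0 ≤ p.2 i}) ∩
            {p : ℝ × (Fin m → ℝ) | p.1 + ∑ i, p.2 i ≤ c}) := by
        ext ⟨t, y⟩
        simp only [hA, simS, Set.mem_setOf_eq, Set.mem_inter_iff, Set.mem_iInter]
        constructor
        · rintro ⟨h0, hi, hs⟩; exact ⟨h0, hi, by linarith⟩
        · rintro ⟨h0, hi, hs⟩; exact ⟨h0, hi, by linarith⟩
      rw [this]
      refine (isClosed_le continuous_const continuous_fst).inter
        ((isClosed_iInter fun i => isClosed_le continuous_const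
          ((continuous_apply i).comp continuous_snd)).inter
          (isClosed_le (continuous_fst.add (by fun_prop : Continuous fun p : ℝ × (Fin m → ℝ) => ∑ i, p.2 i)) continuous_const))
    rw [MeasureTheory.Measure.prod_apply hclosed.measurableSet]
    have hslice : ∀ t : ℝ, volume (Prod.mk t ⁻¹' A)
        = Set.indicator (Set.Icc 0 c)
            (fun t => ENNReal.ofReal ((c - t) ^ m / m.factorial)) t := by
      intro t
      by_cases h1 : t ∈ Set.Icc 0 c
      · have hpre : Prod.mk t ⁻¹' A = simS m (c - t) := by
          ext y
          simp only [hA, Set.mem_preimage, Set.mem_setOf_eq]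
          exact ⟨fun h => h.2, fun h => ⟨h1.1, h⟩⟩
        rw [hpre, ih _ (by linarith [h1.2]), Set.indicator_of_mem h1]
      · rw [Set.indicator_of_notMem h1]
        have hpre : Prod.mk t ⁻¹' A = ∅ := by
          ext y
          simp only [hA, Set.mem_preimage, Set.mem_setOf_eq, Set.mem_empty_iff_false, iff_false]
          rintro ⟨h0, hi, hs⟩
          have hy : 0 ≤ ∑ i, y i := Finset.sum_nonneg fun i _ => hi i
          simp only [Set.mem_Icc, not_and, not_le] at h1
          have := h1 h0
          linarith
        rw [hpre, measure_empty]
    simp only [hslice]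
    rw [lintegral_indicator measurableSet_Icc]
    have hint : IntegrableOn (fun t => (c - t) ^ m / (m.factorial : ℝ)) (Set.Icc 0 c) volume := by
      exact (((continuous_const.sub continuous_id).pow m).div_const _).continuousOn.integrableOn_compact
        isCompact_Icc
    have hnn : 0 ≤ᵐ[volume.restrict (Set.Icc 0 c)]
        fun t => (c - t) ^ m / (m.factorial : ℝ) := by
      refine (ae_restrict_mem measurableSet_Icc).mono fun t ht => ?_
      have : (0:ℝ) ≤ c - t := by linarith [ht.2]
      positivity
    rw [← MeasureTheory.ofReal_integral_eq_lintegral_ofReal hint hnn]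
    congr 1
    rw [MeasureTheory.integral_Icc_eq_integral_Ioc, ← intervalIntegral.integral_of_le hc]
    have hcs := intervalIntegral.integral_comp_sub_left (a := (0:ℝ)) (b := c)
      (fun u => u ^ m / (m.factorial : ℝ)) c
    rw [hcs]
    simp only [sub_zero, sub_self]
    rw [intervalIntegral.integral_div, integral_pow]
    simp only [Nat.factorial_succ, zero_pow, Nat.cast_mul, Nat.cast_add, Nat.cast_one]
    rw [zero_pow (Nat.succ_ne_zero m)]
    have hm : (m.factorial : ℝ) ≠ 0 := Nat.cast_ne_zero.mpr m.factorial_ne_zero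
    have hm1 : (m : ℝ) + 1 ≠ 0 := by positivity
    field_simp
    rw [sub_zero]

lemma isCompact_simS (m : ℕ) : IsCompact (simS m 1) := by
  refine IsCompact.of_isClosed_subset (isCompact_Icc (a := (0 : Fin m → ℝ)) (b := 1))
    (isClosed_simS m 1) ?_
  intro y hy
  rw [Set.mem_Icc]
  constructor
  · intro i; exact hy.1 i
  · intro i
    calc y i ≤ ∑ j, y j := Finset.single_le_sum (fun j _ => hy.1 j) (Finset.mem_univ i)
    _ ≤ 1 := hy.2

lemma integrableOn_simS {m : ℕ} {f : (Fin m → ℝ) → ℝ} (hf : Continuous f) :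
    IntegrableOn f (simS m 1) volume :=
  hf.continuousOn.integrableOn_compact (isCompact_simS m)

lemma sum_ite_eq_sub {m : ℕ} (y : Fin m → ℝ) (j : Fin m) (a : ℝ) :
    ∑ k, (if k = j then a else y k) = ∑ k, y k - y j + a := by
  have h : ∀ k : Fin m, (if k = j then a else y k) = y k + (if k = j then a - y k else 0) := by
    intro k; by_cases h : k = j <;> simp [h]
  simp only [h]
  rw [Finset.sum_add_distrib, Finset.sum_ite_eq' Finset.univ j (fun k => a - y k)]
  simp; ring

noncomputable def Lmap (m : ℕ) (j : Fin m) : (Fin m → ℝ) →ₗ[ℝ] (Fin m → ℝ) where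
  toFun y := fun i => if i = j then -∑ k, y k else y i
  map_add' y z := by
    funext i; by_cases h : i = j <;> simp [h, Finset.sum_add_distrib]; ring
  map_smul' c y := by
    funext i; by_cases h : i = j <;> simp [h, Finset.mul_sum]

noncomputable def Tmap (m : ℕ) (j : Fin m) (y : Fin m → ℝ) : Fin m → ℝ :=
  fun i => if i = j then 1 - ∑ k, y k else y i

lemma Lmap_comp (m : ℕ) (j : Fin m) : (Lmap m j) ∘ₗ (Lmap m j) = LinearMap.id := by
  apply LinearMap.ext; intro y
  funext i
  simp only [LinearMap.comp_apply, LinearMap.id_apply, Lmap, LinearMap.coe_mk, AddHom.coe_mk]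
  by_cases h : i = j
  · subst h
    simp only [if_pos rfl, sum_ite_eq_sub]
    ring_nf
    simp
  · simp [h]

lemma Lmap_measurePreserving (m : ℕ) (j : Fin m) :
    MeasurePreserving (⇑(Lmap m j)) (volume : Measure (Fin m → ℝ)) volume := by
  have hdet : LinearMap.det (Lmap m j) * LinearMap.det (Lmap m j) = 1 := by
    rw [← LinearMap.det_comp, Lmap_comp, LinearMap.det_id]
  have habs : |LinearMap.det (Lmap m j)| = 1 := by
    rcases mul_self_eq_one_iff.mp hdet with h | h <;> simp [h]
  have hne : LinearMap.det (Lmap m j) ≠ 0 := by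
    intro h; rw [h] at habs; simp at habs
  refine ⟨(Lmap m j).continuous_on_pi.measurable, ?_⟩
  rw [Real.map_linearMap_volume_pi_eq_smul_volume_pi hne, abs_inv, habs]
  simp

lemma Tmap_eq (m : ℕ) (j : Fin m) :
    Tmap m j = (fun y => Pi.single j 1 + y) ∘ ⇑(Lmap m j) := by
  funext y i
  simp only [Tmap, Function.comp_apply, Pi.add_apply, Lmap, LinearMap.coe_mk, AddHom.coe_mk,
    Pi.single_apply]
  by_cases h : i = j <;> simp [h] <;> ring

lemma Tmap_measurePreserving (m : ℕ) (j : Fin m) :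
    MeasurePreserving (Tmap m j) (volume : Measure (Fin m → ℝ)) volume := by
  rw [Tmap_eq]
  exact (measurePreserving_add_left volume (Pi.single j 1)).comp (Lmap_measurePreserving m j)

lemma Tmap_involutive (m : ℕ) (j : Fin m) : Function.Involutive (Tmap m j) := by
  intro y
  funext i
  simp only [Tmap]
  by_cases h : i = j
  · subst h
    rw [if_pos rfl, sum_ite_eq_sub]
    ring
  · simp [h]

lemma Tmap_continuous (m : ℕ) (j : Fin m) : Continuous (Tmap m j) := by
  rw [Tmap_eq]
  exact (continuous_const.add continuous_id).comp (Lmap m j).continuous_on_pi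

lemma Tmap_mem (m : ℕ) (j : Fin m) {y : Fin m → ℝ} (hy : y ∈ simS m 1) :
    Tmap m j y ∈ simS m 1 := by
  obtain ⟨h0, hs⟩ := hy
  constructor
  · intro i
    simp only [Tmap]
    by_cases h : i = j
    · subst h; rw [if_pos rfl]; linarith
    · rw [if_neg h]; exact h0 i
  · show ∑ k, Tmap m j y k ≤ 1
    simp only [Tmap]
    rw [sum_ite_eq_sub]
    have := h0 j
    linarith

lemma Tmap_preimage (m : ℕ) (j : Fin m) : Tmap m j ⁻¹' (simS m 1) = simS m 1 := by
  ext y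
  constructor
  · intro h
    have := Tmap_mem m j h
    rwa [Tmap_involutive m j y] at this
  · exact fun h => Tmap_mem m j h

lemma integral_one_sub_sum (m : ℕ) (j : Fin m) :
    ∫ y in simS m 1, (1 - ∑ k, y k) = ∫ y in simS m 1, y j := by
  have hemb : MeasurableEmbedding (Tmap m j) :=
    (Tmap_continuous m j).measurable.measurableEmbedding (Tmap_involutive m j).injective
  have h := (Tmap_measurePreserving m j).setIntegral_preimage_emb hemb
    (fun y => y j) (simS m 1)
  rw [Tmap_preimage] at h
  rw [← h]
  apply setIntegral_congr_fun (isClosed_simS m 1).measurableSet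
  intro y _
  simp [Tmap]

lemma moment_simS (m : ℕ) :
    (∫ y in simS m 1, (1 - ∑ k, y k)) = (volume (simS m 1)).toReal / (m + 1) ∧
    ∀ j : Fin m, (∫ y in simS m 1, y j) = (volume (simS m 1)).toReal / (m + 1) := by
  set V := (volume (simS m 1)).toReal with hV
  set c0 := ∫ y in simS m 1, (1 - ∑ k, y k) with hc0
  have hcoord : ∀ j : Fin m, (∫ y in simS m 1, y j) = c0 :=
    fun j => (integral_one_sub_sum m j).symm
  have hintsum : IntegrableOn (fun y : Fin m → ℝ => ∑ k, y k) (simS m 1) volume :=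
    integrableOn_simS (by fun_prop)
  have hsum : (∫ y in simS m 1, ∑ k, y k) = m * c0 := by
    rw [integral_finset_sum Finset.univ
      (fun k _ => integrableOn_simS (f := fun y : Fin m → ℝ => y k) (continuous_apply k))]
    simp [hcoord, Finset.sum_const]
    try ring
  have hone : (∫ _ in simS m 1, (1:ℝ)) = V := by
    rw [setIntegral_const]; simp; rw [hV]; rfl
  have hkey : c0 = V - m * c0 := by
    conv_lhs => rw [hc0]
    rw [integral_sub (integrableOn_simS continuous_const) hintsum, hone, hsum]
  have hc0V : c0 = V / (m + 1) := by
    have hm : (m : ℝ) + 1 ≠ 0 := by positivity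
    rw [eq_div_iff hm]
    linarith
  exact ⟨hc0V, fun j => by rw [hcoord j, hc0V]⟩

lemma eta_le {t r : ℝ} (ht : 0 ≤ t) (hr : 0 < r) :
    eta t ≤ 1 / r + (Real.log r - 1) * t := by
  rcases eq_or_lt_of_le ht with h | h
  · rw [eta, ← h]
    simp
    positivity
  · have hlog := Real.log_le_sub_one_of_pos (show 0 < 1 / (r * t) by positivity)
    have hrw : Real.log (1 / (r * t)) = -(Real.log r + Real.log t) := by
      rw [one_div, Real.log_inv, Real.log_mul (ne_of_gt hr) (ne_of_gt h)]
    rw [hrw] at hlog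
    have h2 : t * (-(Real.log r + Real.log t)) ≤ t * (1 / (r * t) - 1) :=
      mul_le_mul_of_nonneg_left hlog ht
    have h3 : t * (1 / (r * t)) = 1 / r := by field_simp
    rw [eta]
    nlinarith [h2, h3, mul_comm t r]

/-- the coordinate functions on the simplex -/
noncomputable def xc (m : ℕ) (i : Fin (m + 1)) (y : Fin m → ℝ) : ℝ :=
  if h : (i : ℕ) < m then y ⟨(i : ℕ), h⟩ else 1 - ∑ j, y j

lemma xc_nonneg (m : ℕ) (i : Fin (m + 1)) {y : Fin m → ℝ} (hy : y ∈ simS m 1) :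
    0 ≤ xc m i y := by
  rw [xc]
  by_cases h : (i : ℕ) < m
  · rw [dif_pos h]; exact hy.1 _
  · rw [dif_neg h]; linarith [hy.2]

lemma xc_continuous (m : ℕ) (i : Fin (m + 1)) : Continuous (xc m i) := by
  unfold xc
  by_cases h : (i : ℕ) < m
  · simp only [dif_pos h]; exact continuous_apply _
  · simp only [dif_neg h]; fun_prop

lemma xc_sum (m : ℕ) (y : Fin m → ℝ) : ∑ i, xc m i y = 1 := by
  rw [Fin.sum_univ_castSucc]
  have h1 : ∀ k : Fin m, xc m k.castSucc y = y k := by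
    intro k
    rw [xc, dif_pos (by simp [k.isLt] : ((k.castSucc : ℕ)) < m)]
    exact congrArg y (Fin.ext (by simp))
  have h2 : xc m (Fin.last m) y = 1 - ∑ j, y j := by
    rw [xc, dif_neg (by simp)]
  simp only [h1, h2]
  ring

lemma xc_integral (m : ℕ) (i : Fin (m + 1)) :
    ∫ y in simS m 1, xc m i y = (volume (simS m 1)).toReal / (m + 1) := by
  by_cases h : (i : ℕ) < m
  · simp only [xc, dif_pos h]
    exact (moment_simS m).2 ⟨(i : ℕ), h⟩
  · simp only [xc, dif_neg h]
    exact (moment_simS m).1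

lemma V_simS (m : ℕ) : (volume (simS m 1)).toReal = 1 / m.factorial := by
  rw [volume_simS m 1 zero_le_one, one_pow, ENNReal.toReal_ofReal (by positivity)]

lemma subF_unfold (m : ℕ) (lam : Fin (m + 1) → ℝ) :
    subF (m + 1) lam = ((m : ℝ) + 1) * ((m.factorial : ℝ) *
      ∫ y in simS m 1, eta (∑ i, lam i * xc m i y)) - harmC (m + 1) := by
  rw [subF, simplexIntegral]
  simp only [Nat.add_sub_cancel]
  push_cast
  rfl

lemma subF_le (m : ℕ) (lam : Fin (m + 1) → ℝ) (h0 : ∀ i, 0 ≤ lam i)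
    (hs : ∑ i, lam i = 1) :
    subF (m + 1) lam ≤ Real.log (m + 1) - harmC (m + 1) := by
  rw [subF_unfold]
  set r : ℝ := (m : ℝ) + 1 with hr
  have hrpos : 0 < r := by positivity
  set B : ℝ := Real.log r - 1 with hB
  set g : (Fin m → ℝ) → ℝ := fun y => ∑ i, lam i * xc m i y with hg
  have hgcont : Continuous g := by
    apply continuous_finset_sum
    exact fun i _ => continuous_const.mul (xc_continuous m i)
  have hetacont : Continuous fun y => eta (g y) :=
    (Real.continuous_mul_log.comp hgcont).neg
  have hpt : ∀ y ∈ simS m 1, eta (g y) ≤ 1 / r + B * g y := by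
    intro y hy
    refine eta_le ?_ hrpos
    exact Finset.sum_nonneg fun i _ => mul_nonneg (h0 i) (xc_nonneg m i hy)
  have hmono : (∫ y in simS m 1, eta (g y)) ≤ ∫ y in simS m 1, (1 / r + B * g y) := by
    refine setIntegral_mono_on (integrableOn_simS hetacont) ?_
      (isClosed_simS m 1).measurableSet hpt
    exact integrableOn_simS (by fun_prop)
  set V : ℝ := (volume (simS m 1)).toReal with hV
  have hgint : (∫ y in simS m 1, g y) = V / r := by
    rw [hg]
    rw [integral_finset_sum Finset.univ
      (fun i _ => (integrableOn_simS (f := fun y => lam i * xc m i y) (continuous_const.mul (xc_continuous m i))))]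
    have : ∀ i : Fin (m+1), (∫ y in simS m 1, lam i * xc m i y) = lam i * (V / r) := by
      intro i
      rw [MeasureTheory.integral_const_mul, xc_integral]
    simp only [this, ← Finset.sum_mul, hs, one_mul]
  have hrhs : (∫ y in simS m 1, (1 / r + B * g y)) = 1 / r * V + B * (V / r) := by
    rw [integral_add (integrableOn_simS continuous_const)
      ((integrableOn_simS hgcont).const_mul B), MeasureTheory.integral_const_mul, hgint,
      setIntegral_const]
    simp [mul_comm, hV, measureReal_def]
  have hVval : V = 1 / m.factorial := V_simS m
  have hfac : (0:ℝ) < (m.factorial : ℝ) := by positivity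
  have hle : (∫ y in simS m 1, eta (g y)) ≤ 1 / r * V + B * (V / r) := by
    rw [← hrhs]; exact hmono
  have hfinal : r * ((m.factorial : ℝ) * ∫ y in simS m 1, eta (g y)) ≤ Real.log r := by
    have h1 : r * ((m.factorial : ℝ) * (1 / r * V + B * (V / r))) = Real.log r := by
      rw [hVval, hB]
      field_simp
      ring
    calc r * ((m.factorial : ℝ) * ∫ y in simS m 1, eta (g y))
        ≤ r * ((m.factorial : ℝ) * (1 / r * V + B * (V / r))) := by
          apply mul_le_mul_of_nonneg_left _ (le_of_lt hrpos)
          exact mul_le_mul_of_nonneg_left hle (le_of_lt hfac)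
      _ = Real.log r := h1
  have : Real.log ((m : ℝ) + 1) = Real.log r := by rw [hr]
  push_cast
  linarith [hfinal]

lemma subF_const (m : ℕ) :
    subF (m + 1) (fun _ => (((m : ℕ) + 1 : ℕ) : ℝ)⁻¹) = Real.log (m + 1) - harmC (m + 1) := by
  rw [subF_unfold]
  set r : ℝ := (m : ℝ) + 1 with hr
  have hrpos : 0 < r := by positivity
  have hfun : (fun y : Fin m → ℝ => eta (∑ i, (((m : ℕ) + 1 : ℕ) : ℝ)⁻¹ * xc m i y))
      = fun _ => eta r⁻¹ := by
    funext y
    congr 1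
    rw [← Finset.mul_sum, xc_sum]
    push_cast
    simp
    exact hr.symm
  rw [hfun, setIntegral_const, measureReal_def, V_simS, smul_eq_mul]
  have heta : eta r⁻¹ = r⁻¹ * Real.log r := by
    rw [eta, Real.log_inv]; ring
  rw [heta]
  have hfac : (0:ℝ) < (m.factorial : ℝ) := by positivity
  push_cast
  field_simp

lemma sum_eigen {n : ℕ} (ρ : Matrix (Fin n) (Fin n) ℂ) (hH : ρ.IsHermitian)
    (ht : ρ.trace = 1) : ∑ i, hH.eigenvalues i = 1 := by
  have h1 : ρ.trace = ∑ i, (hH.eigenvalues i : ℂ) := by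
    conv_lhs => rw [hH.spectral_theorem]
    rw [Unitary.conjStarAlgAut_apply, Matrix.trace_mul_cycle]
    rw [Matrix.mem_unitaryGroup_iff'.mp (hH.eigenvectorUnitary).2, one_mul, Matrix.trace_diagonal]
    simp
  rw [ht] at h1
  have h2 : ((∑ i, hH.eigenvalues i : ℝ) : ℂ) = 1 := by
    push_cast
    exact h1.symm
  exact_mod_cast h2

lemma herm_smul_one (n : ℕ) : ((n : ℂ)⁻¹ • (1 : Matrix (Fin n) (Fin n) ℂ)).IsHermitian := by
  simp [Matrix.IsHermitian, Matrix.conjTranspose_smul, star_inv₀]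

lemma eig_smul_one {n : ℕ}
    (hH : ((n : ℂ)⁻¹ • (1 : Matrix (Fin n) (Fin n) ℂ)).IsHermitian) (i : Fin n) :
    hH.eigenvalues i = (n : ℝ)⁻¹ := by
  have h := hH.mulVec_eigenvectorBasis i
  rw [Matrix.smul_mulVec, Matrix.one_mulVec] at h
  have hvne : ⇑(hH.eigenvectorBasis i) ≠ 0 := by
    intro h0
    apply hH.eigenvectorBasis.orthonormal.ne_zero i
    ext k
    exact congrFun h0 k
  obtain ⟨k, hk⟩ := Function.ne_iff.mp hvne
  have hk' : (hH.eigenvectorBasis i) k ≠ 0 := hk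
  have h2 := congrFun h k
  simp only [Pi.smul_apply, smul_eq_mul, Complex.real_smul] at h2
  have h3 : ((n : ℂ))⁻¹ = (hH.eigenvalues i : ℂ) := mul_right_cancel₀ hk' h2
  have h4 : (((n : ℝ))⁻¹ : ℂ) = (hH.eigenvalues i : ℂ) := by push_cast; exact h3
  exact_mod_cast h4.symm

lemma subF_congr {a b : ℕ} (h : a = b) (f : Fin a → ℝ) :
    subF a f = subF b (fun k => f (Fin.cast h.symm k)) := by subst h; rfl


/-- Q(ρ) ≤ ln n − C_n, with equality for the maximally mixed state I/n. -/
theorem subentropy_le_log_sub_C (n : ℕ) (hn : 1 ≤ n) (ρ : Matrix (Fin n) (Fin n) ℂ)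
    (hρ : ρ.PosSemidef) (ht : ρ.trace = 1) :
    Qmat ρ ≤ Real.log n - harmC n ∧
    Qmat ((n : ℂ)⁻¹ • (1 : Matrix (Fin n) (Fin n) ℂ)) = Real.log n - harmC n ∧
    subF n (fun _ => (n : ℝ)⁻¹) = Real.log n - harmC n := by
  obtain ⟨m, rfl⟩ : ∃ m, n = m + 1 := ⟨n - 1, (Nat.succ_pred_eq_of_pos hn).symm⟩
  have h3 : subF (m + 1) (fun _ => (((m + 1 : ℕ)) : ℝ)⁻¹)
      = Real.log ((m + 1 : ℕ)) - harmC (m + 1) := by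
    have h := subF_const m
    push_cast at h ⊢
    exact h
  refine ⟨?_, ?_, h3⟩
  · have hH : ρ.IsHermitian := hρ.isHermitian
    unfold Qmat
    rw [dif_pos hH, subF_congr (Fintype.card_fin (m+1))]
    have hle := subF_le m
      (fun k => hH.eigenvalues ((Fintype.equivFin (Fin (m+1))).symm
        (Fin.cast (Fintype.card_fin (m+1)).symm k)))
      (fun k => hρ.eigenvalues_nonneg _) ?_
    · have hcast : (((m + 1 : ℕ)) : ℝ) = (m : ℝ) + 1 := by push_cast; ring
      rw [hcast]
      exact hle
    · refine Fintype.sum_bijective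
        (fun k : Fin (m+1) => (Fintype.equivFin (Fin (m+1))).symm
          (Fin.cast (Fintype.card_fin (m+1)).symm k))
        (((Fintype.equivFin (Fin (m+1))).symm.bijective).comp
          (finCongr (Fintype.card_fin (m+1)).symm).bijective)
        _ hH.eigenvalues (fun k => rfl) |>.trans (sum_eigen ρ hH ht)
  · have hH := herm_smul_one (m + 1)
    unfold Qmat
    rw [dif_pos hH, subF_congr (Fintype.card_fin (m+1))]
    have heq : (fun k : Fin (m+1) => hH.eigenvalues ((Fintype.equivFin (Fin (m+1))).symm
        (Fin.cast (Fintype.card_fin (m+1)).symm k)))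
        = fun _ => (((m + 1 : ℕ)) : ℝ)⁻¹ := funext fun k => eig_smul_one hH _
    rw [heq]
    exact h3
end

section
/- For every n ≥ 2, the simplex integral identity −n ∫_{Δ_n} (1 + ln x_1)(1 − n x_1) dx = n − 1 holds, where x_1 denotes the first coordinate on the simplex. (This computes the derivative at λ = 0 of λ ↦ F(1−(n−1)λ, λ, …, λ).) -/
open MeasureTheory Matrix
open scoped ComplexOrder

def Sset (m : ℕ) (c : ℝ) : Set (Fin m → ℝ) := {y | (∀ i, 0 ≤ y i) ∧ ∑ i, y i ≤ c}

lemma isClosed_Sset (m : ℕ) (c : ℝ) : IsClosed (Sset m c) := by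
  have h1 : IsClosed {y : Fin m → ℝ | ∀ i, 0 ≤ y i} := by
    have : {y : Fin m → ℝ | ∀ i, 0 ≤ y i} = ⋂ i, {y | 0 ≤ y i} := by
      ext y; simp
    rw [this]
    exact isClosed_iInter fun i => isClosed_le continuous_const (continuous_apply i)
  have h2 : IsClosed {y : Fin m → ℝ | ∑ i, y i ≤ c} :=
    isClosed_le (by continuity) continuous_const
  exact h1.inter h2

lemma measurableSet_Sset (m : ℕ) (c : ℝ) : MeasurableSet (Sset m c) :=
  (isClosed_Sset m c).measurableSet

lemma Sset_empty {m : ℕ} {c : ℝ} (hc : c < 0) : Sset m c = ∅ := by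
  ext y
  simp only [Sset, Set.mem_setOf_eq, Set.mem_empty_iff_false, iff_false, not_and]
  intro h hs
  have : (0:ℝ) ≤ ∑ i, y i := Finset.sum_nonneg fun i _ => h i
  linarith

lemma cons_mem_Sset_iff {m : ℕ} {c t : ℝ} {z : Fin m → ℝ} :
    Fin.cons t z ∈ Sset (m+1) c ↔ 0 ≤ t ∧ (∀ i, 0 ≤ z i) ∧ ∑ i, z i ≤ c - t := by
  simp only [Sset, Set.mem_setOf_eq, Fin.forall_fin_succ, Fin.cons_zero, Fin.cons_succ,
    Fin.sum_cons]
  constructor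
  · rintro ⟨⟨h0, hs⟩, hsum⟩; exact ⟨h0, hs, by linarith⟩
  · rintro ⟨h0, hs, hsum⟩; exact ⟨⟨h0, hs⟩, by linarith⟩

lemma volume_Sset (m : ℕ) : ∀ c : ℝ, 0 ≤ c →
    volume (Sset m c) = ENNReal.ofReal (c ^ m / m.factorial) := by
  induction m with
  | zero =>
    intro c hc
    have : Sset 0 c = Set.univ := by
      ext y; simp [Sset, hc]
    rw [this]
    simp [volume_pi, Measure.pi_univ]
  | succ m ih =>
    intro c hc
    have key := (measurePreserving_piFinSuccAbove (fun _ : Fin (m+1) => (volume : Measure ℝ)) 0).symm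
    have hA : volume (Sset (m+1) c)
        = ((volume : Measure ℝ).prod (volume : Measure (Fin m → ℝ)))
          ((MeasurableEquiv.piFinSuccAbove (fun _ : Fin (m+1) => ℝ) 0).symm ⁻¹' (Sset (m+1) c)) := by
      rw [volume_pi]
      exact (key.measure_preimage (measurableSet_Sset (m+1) c).nullMeasurableSet).symm
    rw [hA, Measure.prod_apply
      ((MeasurableEquiv.piFinSuccAbove (fun _ : Fin (m+1) => ℝ) 0).symm.measurable
        (measurableSet_Sset (m+1) c))]
    have hslice : ∀ t : ℝ,
        volume (Prod.mk t ⁻¹' ((MeasurableEquiv.piFinSuccAbove (fun _ : Fin (m+1) => ℝ) 0).symm ⁻¹' (Sset (m+1) c)))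
        = Set.indicator (Set.Icc 0 c) (fun t => ENNReal.ofReal ((c - t) ^ m / m.factorial)) t := by
      intro t
      have hset : (Prod.mk t ⁻¹' ((MeasurableEquiv.piFinSuccAbove (fun _ : Fin (m+1) => ℝ) 0).symm ⁻¹' (Sset (m+1) c)))
          = if 0 ≤ t then Sset m (c - t) else ∅ := by
        ext z
        simp only [Set.mem_preimage, MeasurableEquiv.piFinSuccAbove_symm_apply,
          Fin.insertNthEquiv, Equiv.coe_fn_mk, Fin.insertNth_zero, cons_mem_Sset_iff]
        by_cases h0 : 0 ≤ t
        · simp [h0, Sset]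
        · simp [h0]
      rw [hset]
      by_cases h0 : 0 ≤ t
      · by_cases h1 : t ≤ c
        · rw [if_pos h0, ih (c - t) (by linarith),
            Set.indicator_of_mem (Set.mem_Icc.mpr ⟨h0, h1⟩)]
        · rw [if_pos h0, Sset_empty (by linarith), measure_empty,
            Set.indicator_of_notMem (by simp [Set.mem_Icc]; intro; linarith)]
      · rw [if_neg h0, measure_empty,
          Set.indicator_of_notMem (by simp [Set.mem_Icc]; intro; linarith)]
    simp_rw [hslice]
    rw [lintegral_indicator measurableSet_Icc]
    rw [← ofReal_integral_eq_lintegral_ofReal]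
    · congr 1
      rw [MeasureTheory.integral_Icc_eq_integral_Ioc, ← intervalIntegral.integral_of_le hc]
      have : ∀ t : ℝ, (c - t) ^ m / (m.factorial : ℝ) = (c - t) ^ m * (1 / m.factorial) := by
        intro t; ring
      simp_rw [this]
      rw [intervalIntegral.integral_mul_const,
        intervalIntegral.integral_comp_sub_left (fun x => x ^ m) c]
      simp only [sub_self, sub_zero, integral_pow]
      rw [Nat.factorial_succ]
      have hm : ((m+1 : ℕ) : ℝ) ≠ 0 := by positivity
      field_simp
      rw [zero_pow (Nat.succ_ne_zero m), sub_zero]; push_cast; ring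
    · exact (Continuous.integrableOn_Icc (by continuity))
    · refine (ae_restrict_iff' measurableSet_Icc).2 (ae_of_all _ fun t ht => ?_)
      have : 0 ≤ c - t := by linarith [ht.2]
      positivity

lemma slice_eq (k : ℕ) (t : ℝ) :
    {z : Fin k → ℝ | Fin.cons t z ∈ Sset (k+1) 1} = if 0 ≤ t then Sset k (1 - t) else ∅ := by
  ext z
  simp only [Set.mem_setOf_eq, cons_mem_Sset_iff]
  by_cases h0 : 0 ≤ t
  · simp [h0, Sset]
  · simp [h0]

lemma volume_slice (k : ℕ) (t : ℝ) :
    volume {z : Fin k → ℝ | Fin.cons t z ∈ Sset (k+1) 1}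
      = Set.indicator (Set.Icc 0 1) (fun t => ENNReal.ofReal ((1-t) ^ k / k.factorial)) t := by
  rw [slice_eq]
  by_cases h0 : 0 ≤ t
  · by_cases h1 : t ≤ 1
    · rw [if_pos h0, volume_Sset k (1-t) (by linarith),
        Set.indicator_of_mem (Set.mem_Icc.mpr ⟨h0, h1⟩)]
    · rw [if_pos h0, Sset_empty (by linarith), measure_empty,
        Set.indicator_of_notMem (by simp [Set.mem_Icc]; intro; linarith)]
  · rw [if_neg h0, measure_empty,
      Set.indicator_of_notMem (by simp [Set.mem_Icc]; intro; linarith)]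

lemma lintegral_Sset (k : ℕ) (G : ℝ → ENNReal) (hG : Measurable G) :
    ∫⁻ y in Sset (k+1) 1, G (y 0) =
      ∫⁻ t in Set.Icc (0:ℝ) 1, G t * ENNReal.ofReal ((1-t) ^ k / k.factorial) := by
  have key := (measurePreserving_piFinSuccAbove (fun _ : Fin (k+1) => (volume : Measure ℝ)) 0).symm
  have hGm : Measurable fun y : Fin (k+1) → ℝ => G (y 0) := hG.comp (measurable_pi_apply 0)
  rw [← lintegral_indicator (measurableSet_Sset (k+1) 1)]
  rw [volume_pi, ← key.lintegral_comp (hGm.indicator (measurableSet_Sset (k+1) 1))]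
  have hcomp : ∀ p : ℝ × (Fin k → ℝ),
      Set.indicator (Sset (k+1) 1) (fun y => G (y 0))
        ((MeasurableEquiv.piFinSuccAbove (fun _ : Fin (k+1) => ℝ) 0).symm p)
      = Set.indicator {z : Fin k → ℝ | Fin.cons p.1 z ∈ Sset (k+1) 1} (fun _ => G p.1) p.2 := by
    classical
    rintro ⟨t, z⟩
    simp only [MeasurableEquiv.piFinSuccAbove_symm_apply, Fin.insertNthEquiv, Equiv.coe_fn_mk,
      Fin.insertNth_zero, cast_eq]
    rw [Set.indicator_apply, Set.indicator_apply]
    simp only [Set.mem_setOf_eq, Fin.cons_zero]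
  simp_rw [hcomp]
  have hmeas : Measurable fun p : ℝ × (Fin k → ℝ) =>
      Set.indicator (Sset (k+1) 1) (fun y => G (y 0))
        ((MeasurableEquiv.piFinSuccAbove (fun _ : Fin (k+1) => ℝ) 0).symm p) :=
    (hGm.indicator (measurableSet_Sset (k+1) 1)).comp
      (MeasurableEquiv.piFinSuccAbove (fun _ : Fin (k+1) => ℝ) 0).symm.measurable
  have haem : AEMeasurable (fun p : ℝ × (Fin k → ℝ) =>
      Set.indicator {z : Fin k → ℝ | Fin.cons p.1 z ∈ Sset (k+1) 1} (fun _ => G p.1) p.2)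
      ((volume : Measure ℝ).prod (Measure.pi fun _ : Fin k => (volume : Measure ℝ))) := by
    have := hmeas
    simp_rw [hcomp] at this
    exact this.aemeasurable
  rw [lintegral_prod _ haem]
  have hinner : ∀ t : ℝ,
      (∫⁻ z : Fin k → ℝ, Set.indicator {z : Fin k → ℝ | Fin.cons t z ∈ Sset (k+1) 1}
        (fun _ => G t) z ∂(Measure.pi fun _ : Fin k => (volume : Measure ℝ)))
      = G t * Set.indicator (Set.Icc (0:ℝ) 1) (fun t => ENNReal.ofReal ((1-t) ^ k / k.factorial)) t := by
    intro t
    rw [← volume_pi]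
    have hms : MeasurableSet {z : Fin k → ℝ | Fin.cons t z ∈ Sset (k+1) 1} := by
      rw [slice_eq]
      split
      · exact measurableSet_Sset _ _
      · exact MeasurableSet.empty
    rw [lintegral_indicator hms, setLIntegral_const, ← volume_slice]
  simp_rw [hinner]
  have : ∀ t : ℝ, G t * Set.indicator (Set.Icc (0:ℝ) 1)
      (fun t => ENNReal.ofReal ((1-t) ^ k / k.factorial)) t
      = Set.indicator (Set.Icc (0:ℝ) 1)
        (fun t => G t * ENNReal.ofReal ((1-t) ^ k / k.factorial)) t := by
    intro t
    by_cases h : t ∈ Set.Icc (0:ℝ) 1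
    · rw [Set.indicator_of_mem h, Set.indicator_of_mem h]
    · rw [Set.indicator_of_notMem h, Set.indicator_of_notMem h, mul_zero]
  simp_rw [this]
  rw [lintegral_indicator measurableSet_Icc]

lemma intervalIntegrable_log01 : IntervalIntegrable Real.log volume 0 1 := by
  have hrp : IntervalIntegrable (fun x : ℝ => 2 * x ^ (-(1/2) : ℝ)) volume 0 1 :=
    (intervalIntegral.intervalIntegrable_rpow' (by norm_num)).const_mul 2
  refine hrp.mono_fun Real.measurable_log.aestronglyMeasurable ?_
  refine (ae_restrict_iff' measurableSet_uIoc).2 (ae_of_all _ fun x hx => ?_)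
  rw [Set.uIoc_of_le (by norm_num : (0:ℝ) ≤ 1)] at hx
  obtain ⟨hx0, hx1⟩ := hx
  have hrt : (0:ℝ) < x ^ ((1:ℝ)/2) := Real.rpow_pos_of_pos hx0 _
  have hlog : Real.log x ≤ 0 := Real.log_nonpos (le_of_lt hx0) hx1
  have h1 : -Real.log x = 2 * (-Real.log (x ^ ((1:ℝ)/2))) := by
    rw [Real.log_rpow hx0]; ring
  have h2 : -Real.log (x ^ ((1:ℝ)/2)) ≤ 1 / x ^ ((1:ℝ)/2) := by
    have h4 := Real.log_le_sub_one_of_pos (show (0:ℝ) < 1 / x ^ ((1:ℝ)/2) by positivity)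
    rw [Real.log_div one_ne_zero (ne_of_gt hrt), Real.log_one, zero_sub] at h4
    have h5 : (0:ℝ) < 1 / x ^ ((1:ℝ)/2) := by positivity
    linarith
  have hneg : x ^ (-(1/2) : ℝ) = 1 / x ^ ((1:ℝ)/2) := by
    rw [Real.rpow_neg (le_of_lt hx0)]
    exact (one_div _).symm
  have hbound : -Real.log x ≤ 2 * x ^ (-(1/2) : ℝ) := by
    rw [h1, hneg]; linarith
  have habs : ‖Real.log x‖ = -Real.log x := by
    rw [Real.norm_eq_abs, abs_of_nonpos hlog]
  show ‖Real.log x‖ ≤ ‖2 * x ^ (-(1/2) : ℝ)‖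
  rw [habs, Real.norm_eq_abs]
  have : (0:ℝ) ≤ 2 * x ^ (-(1/2) : ℝ) := by positivity
  rw [abs_of_nonneg this]
  exact hbound

lemma key_integral (k : ℕ) :
    ∫ t in (0:ℝ)..1, (1 + Real.log t) * ((1 - ((k:ℝ)+2) * t) * (1-t)^k) = -(1/((k:ℝ)+2)) := by
  set F : ℝ → ℝ := fun t => t * Real.log t * (1-t)^(k+1) + (1-t)^(k+1)
    - (((k:ℝ)+1)/((k:ℝ)+2)) * (1-t)^(k+2) with hF
  have hcont : ContinuousOn F (Set.Icc 0 1) := by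
    apply Continuous.continuousOn
    exact ((Real.continuous_mul_log.mul (by continuity)).add (by continuity)).sub
      (by continuity)
  have hQ : Continuous fun t : ℝ => (1 - ((k:ℝ)+2) * t) * (1-t)^k := by continuity
  have hderiv : ∀ x ∈ Set.Ioo (0:ℝ) 1, HasDerivAt F
      ((1 + Real.log x) * ((1 - ((k:ℝ)+2) * x) * (1-x)^k)) x := by
    intro x hx
    have hx0 : x ≠ 0 := ne_of_gt hx.1
    have h1 : HasDerivAt (fun t : ℝ => t * Real.log t) (Real.log x + 1) x :=
      Real.hasDerivAt_mul_log hx0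
    have hs : HasDerivAt (fun t : ℝ => 1 - t) (-1) x := by
      simpa using (hasDerivAt_id x).const_sub 1
    have h2 : HasDerivAt (fun t : ℝ => (1-t)^(k+1))
        (((k:ℝ)+1) * (1-x)^k * (-1)) x := by
      have := hs.fun_pow (k+1)
      simpa [Nat.add_sub_cancel] using this
    have h3 : HasDerivAt (fun t : ℝ => (1-t)^(k+2))
        (((k:ℝ)+2) * (1-x)^(k+1) * (-1)) x := by
      have := hs.fun_pow (k+2)
      have h4 : ((k+2 : ℕ) : ℝ) = (k:ℝ)+2 := by push_cast; ring
      simpa [Nat.add_sub_cancel, h4] using this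
    have hD := ((h1.fun_mul h2).fun_add h2).fun_sub (h3.const_mul (((k:ℝ)+1)/((k:ℝ)+2)))
    refine hD.congr_deriv ?_
    have hk2 : ((k:ℝ)+2) ≠ 0 := by positivity
    field_simp
    ring
  have hint : IntervalIntegrable
      (fun t => (1 + Real.log t) * ((1 - ((k:ℝ)+2) * t) * (1-t)^k)) volume 0 1 := by
    have heq : (fun t : ℝ => (1 + Real.log t) * ((1 - ((k:ℝ)+2) * t) * (1-t)^k))
        = fun t => (1 - ((k:ℝ)+2) * t) * (1-t)^k
          + Real.log t * ((1 - ((k:ℝ)+2) * t) * (1-t)^k) := by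
      funext t; ring
    rw [heq]
    exact (hQ.intervalIntegrable 0 1).add
      (intervalIntegrable_log01.mul_continuousOn hQ.continuousOn)
  rw [intervalIntegral.integral_eq_sub_of_hasDerivAt_of_le (by norm_num) hcont hderiv hint]
  have hk2 : ((k:ℝ)+2) ≠ 0 := by positivity
  simp only [hF]
  norm_num
  field_simp
  ring

lemma setIntegral_Sset (k : ℕ) (g : ℝ → ℝ) (hgm : Measurable g)
    (hInt : IntegrableOn g (Set.Icc (0:ℝ) 1)) :
    ∫ y in Sset (k+1) 1, g (y 0) =
      ∫ t in Set.Icc (0:ℝ) 1, g t * ((1-t) ^ k / k.factorial) := by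
  have hw : Continuous fun t : ℝ => (1-t) ^ k / (k.factorial : ℝ) := by continuity
  have hwnonneg : ∀ t ∈ Set.Icc (0:ℝ) 1, 0 ≤ (1-t) ^ k / (k.factorial : ℝ) := by
    intro t ht
    have : (0:ℝ) ≤ 1 - t := by linarith [ht.2]
    positivity
  have hIntRHS : IntegrableOn (fun t => g t * ((1-t) ^ k / (k.factorial : ℝ)))
      (Set.Icc (0:ℝ) 1) := by
    rw [← intervalIntegrable_iff_integrableOn_Icc_of_le (by norm_num : (0:ℝ) ≤ 1)]
    exact ((intervalIntegrable_iff_integrableOn_Icc_of_le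
      (by norm_num : (0:ℝ) ≤ 1)).2 hInt).mul_continuousOn hw.continuousOn
  have hfin : ∫⁻ t in Set.Icc (0:ℝ) 1, ENNReal.ofReal ‖g t‖ < ⊤ := by
    have := hInt.2
    rwa [hasFiniteIntegral_iff_norm] at this
  have hIntS : IntegrableOn (fun y : Fin (k+1) → ℝ => g (y 0)) (Sset (k+1) 1) := by
    constructor
    · exact (hgm.comp (measurable_pi_apply 0)).aestronglyMeasurable
    · rw [hasFiniteIntegral_iff_norm]
      have hrw := lintegral_Sset k (fun t => ENNReal.ofReal ‖g t‖) hgm.norm.ennreal_ofReal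
      calc ∫⁻ y in Sset (k+1) 1, ENNReal.ofReal ‖g (y 0)‖
          = ∫⁻ t in Set.Icc (0:ℝ) 1,
            ENNReal.ofReal ‖g t‖ * ENNReal.ofReal ((1-t) ^ k / k.factorial) := hrw
        _ ≤ ∫⁻ t in Set.Icc (0:ℝ) 1,
            ENNReal.ofReal ‖g t‖ * ENNReal.ofReal (1 / (k.factorial : ℝ)) := by
            refine lintegral_mono_ae ((ae_restrict_iff' measurableSet_Icc).2
              (ae_of_all _ fun t ht => ?_))
            have h1 : (1-t) ^ k ≤ 1 :=
              pow_le_one₀ (by linarith [ht.2]) (by linarith [ht.1])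
            gcongr
        _ = (∫⁻ t in Set.Icc (0:ℝ) 1, ENNReal.ofReal ‖g t‖)
              * ENNReal.ofReal (1 / (k.factorial : ℝ)) :=
            lintegral_mul_const _ hgm.norm.ennreal_ofReal
        _ < ⊤ := ENNReal.mul_lt_top hfin ENNReal.ofReal_lt_top
  rw [integral_eq_lintegral_pos_part_sub_lintegral_neg_part hIntS,
    integral_eq_lintegral_pos_part_sub_lintegral_neg_part hIntRHS]
  congr 1
  · congr 1
    rw [lintegral_Sset k (fun t => ENNReal.ofReal (g t)) hgm.ennreal_ofReal]
    refine setLIntegral_congr_fun measurableSet_Icc (fun t ht => ?_)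
    rw [← ENNReal.ofReal_mul' (hwnonneg t ht)]
  · congr 1
    rw [lintegral_Sset k (fun t => ENNReal.ofReal (-g t)) hgm.neg.ennreal_ofReal]
    refine setLIntegral_congr_fun measurableSet_Icc (fun t ht => ?_)
    rw [← ENNReal.ofReal_mul' (hwnonneg t ht), neg_mul]

/-- the simplex integral identity −n ∫_{Δ_n} (1 + ln x₁)(1 − n x₁) dx = n − 1. -/
theorem simplex_integral_derivative_identity (n : ℕ) (hn : 2 ≤ n) :
    -((n : ℝ) * simplexIntegral n
        (fun x => (1 + Real.log (x ⟨0, by omega⟩)) * (1 - (n : ℝ) * x ⟨0, by omega⟩)))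
      = (n : ℝ) - 1 := by
  obtain ⟨k, rfl⟩ : ∃ k, n = k + 2 := ⟨n - 2, by omega⟩
  have hg : ∀ t : ℝ, (1 + Real.log t) * (1 - ((k+2:ℕ) : ℝ) * t)
      = (1 + Real.log t) * (1 - ((k:ℝ)+2) * t) := by
    intro t; push_cast; ring
  rw [simplexIntegral]
  have h21 : k + 2 - 1 = k + 1 := rfl
  simp only [h21]
  set g : ℝ → ℝ := fun t => (1 + Real.log t) * (1 - ((k:ℝ)+2) * t) with hgdef
  have hfun : (fun y : Fin (k+1) → ℝ =>
      (1 + Real.log (if h : (0:ℕ) < k + 1 then y ⟨0, h⟩ else 1 - ∑ j, y j)) *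
        (1 - ((k+2:ℕ) : ℝ) * if h : (0:ℕ) < k + 1 then y ⟨0, h⟩ else 1 - ∑ j, y j))
      = fun y => g (y 0) := by
    funext y
    simp only [hgdef]
    norm_num
  show -(((k+2:ℕ):ℝ) * ((((k+1).factorial : ℕ) : ℝ) *
      ∫ y : Fin (k+1) → ℝ in {y : Fin (k+1) → ℝ | (∀ i, 0 ≤ y i) ∧ ∑ i, y i ≤ 1},
        (1 + Real.log (if h : (0:ℕ) < k + 1 then y ⟨0, h⟩ else 1 - ∑ j, y j)) *
          (1 - ((k+2:ℕ) : ℝ) * if h : (0:ℕ) < k + 1 then y ⟨0, h⟩ else 1 - ∑ j, y j)))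
      = ((k+2:ℕ):ℝ) - 1
  rw [show ({y : Fin (k+1) → ℝ | (∀ i, 0 ≤ y i) ∧ ∑ i, y i ≤ 1}) = Sset (k+1) 1 from rfl]
  rw [hfun]
  have hgm : Measurable g :=
    (measurable_const.add Real.measurable_log).mul
      (measurable_const.sub (measurable_const.mul measurable_id))
  have hgInt : IntegrableOn g (Set.Icc (0:ℝ) 1) := by
    rw [← intervalIntegrable_iff_integrableOn_Icc_of_le (by norm_num : (0:ℝ) ≤ 1)]
    have heq : g = fun t => (1 - ((k:ℝ)+2) * t) + Real.log t * (1 - ((k:ℝ)+2) * t) := by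
      funext t; simp only [hgdef]; ring
    rw [heq]
    exact ((by continuity : Continuous fun t : ℝ => 1 - ((k:ℝ)+2) * t).intervalIntegrable 0 1).add
      (intervalIntegrable_log01.mul_continuousOn (by continuity : Continuous fun t : ℝ => 1 - ((k:ℝ)+2) * t).continuousOn)
  have hmain := setIntegral_Sset k g hgm hgInt
  rw [hmain]
  have hval : ∫ t in Set.Icc (0:ℝ) 1, g t * ((1-t) ^ k / k.factorial)
      = -(1/((k:ℝ)+2)) * (1 / k.factorial) := by
    rw [MeasureTheory.integral_Icc_eq_integral_Ioc,
      ← intervalIntegral.integral_of_le (by norm_num : (0:ℝ) ≤ 1)]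
    have heq2 : (fun t : ℝ => g t * ((1-t) ^ k / k.factorial))
        = fun t => ((1 + Real.log t) * ((1 - ((k:ℝ)+2) * t) * (1-t)^k)) * (1 / (k.factorial : ℝ)) := by
      funext t; simp only [hgdef]; ring
    rw [heq2, intervalIntegral.integral_mul_const, key_integral]
  rw [hval]
  have hfact : (((k+1).factorial : ℕ) : ℝ) = ((k:ℝ)+1) * (k.factorial : ℝ) := by
    rw [Nat.factorial_succ]; push_cast; ring
  have hkf : ((k.factorial : ℕ) : ℝ) ≠ 0 := Nat.cast_ne_zero.mpr k.factorial_ne_zero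
  push_cast [hfact]
  field_simp
  ring
end

section
/- Guessing-probability bound for two pure states: let p ∈ (0,1), set p_1 = p, p_2 = 1 − p, let θ ∈ (0,π), and define λ_± = (1 ± √(1 − 4 p_1 p_2 sin²θ))/2. Then F(p_1, p_2) − F(λ_+, λ_−) ≤ −ln( (1 + √(1 − 4 p_1 p_2 cos²θ))/2 ). (The left side is the conditional subentropy Q(X|B) of the classical-quantum state built from two pure states with overlap cos θ and probabilities p_1, p_2; the right side is its min-conditional entropy H_min(X|B) = −ln p_guess.) -/
open MeasureTheory Matrix
open scoped ComplexOrder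

lemma continuous_eta : Continuous eta := by
  unfold eta; exact (Real.continuous_mul_log).neg

lemma subF_two (u v : ℝ) :
    subF 2 ![u, v] = 2 * (∫ t in (0:ℝ)..1, eta (v + (u - v) * t)) - 1/2 := by
  have hC : harmC 2 = 1/2 := by norm_num [harmC]
  have hI : (∫ (y : Fin 1 → ℝ) in {y : Fin 1 → ℝ | (∀ i, 0 ≤ y i) ∧ y 0 ≤ 1},
        eta (u * y 0 + v * (1 - y 0)))
      = ∫ t in (0:ℝ)..1, eta (v + (u - v) * t) := by
    have hmp := (volume_preserving_funUnique (Fin 1) ℝ)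
    have hemb : MeasurableEmbedding (MeasurableEquiv.funUnique (Fin 1) ℝ) :=
      (MeasurableEquiv.funUnique (Fin 1) ℝ).measurableEmbedding
    have key := hmp.setIntegral_preimage_emb hemb
        (fun r : ℝ => eta (v + (u - v) * r)) (Set.Icc 0 1)
    have hset : {y : Fin 1 → ℝ | (∀ i, 0 ≤ y i) ∧ y 0 ≤ 1}
        = (MeasurableEquiv.funUnique (Fin 1) ℝ) ⁻¹' (Set.Icc 0 1) := by
      ext y
      simp [MeasurableEquiv.funUnique, Fin.forall_fin_one]
    rw [hset]
    rw [intervalIntegral.integral_of_le (by norm_num : (0:ℝ) ≤ 1),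
      ← integral_Icc_eq_integral_Ioc, ← key]
    apply setIntegral_congr_fun
    · exact (MeasurableEquiv.funUnique (Fin 1) ℝ).measurable measurableSet_Icc
    · intro y hy
      simp [MeasurableEquiv.funUnique]
      ring_nf
  have : subF 2 ![u, v] =
      2 * (∫ (y : Fin 1 → ℝ) in {y : Fin 1 → ℝ | (∀ i, 0 ≤ y i) ∧ y 0 ≤ 1},
        eta (u * y 0 + v * (1 - y 0))) - 1/2 := by
    rw [subF, hC, simplexIntegral]
    norm_num
    show (∫ (y : Fin 1 → ℝ) in {y : Fin 1 → ℝ | (∀ i, 0 ≤ y i) ∧ ∑ i, y i ≤ 1},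
        eta (u * y 0 + v * (1 - ∑ j : Fin 1, y j))) = _
    simp [Fin.sum_univ_one]
  rw [this, hI]

noncomputable def Afn (y : ℝ) : ℝ := y^2/4 - y^2 * Real.log y / 2

lemma hasDerivAt_Afn {y : ℝ} (hy : 0 < y) : HasDerivAt Afn (eta y) y := by
  have h1 : HasDerivAt (fun z : ℝ => z^2) (2*y) y := by simpa using hasDerivAt_pow 2 y
  have hlog : HasDerivAt Real.log y⁻¹ y := Real.hasDerivAt_log hy.ne'
  have h2 : HasDerivAt (fun z : ℝ => z^2 * Real.log z) (2*y*Real.log y + y^2 * y⁻¹) y :=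
    h1.mul hlog
  have h3 := (h1.div_const 4).sub ((h2.div_const 2))
  refine h3.congr_deriv ?_
  unfold eta
  field_simp
  ring

lemma integral_eta_eq (u v : ℝ) (hu : 0 < u) (hv : 0 < v) (huv : u ≠ v) :
    (∫ t in (0:ℝ)..1, eta (v + (u - v) * t)) = (Afn u - Afn v) / (u - v) := by
  have hne : u - v ≠ 0 := sub_ne_zero.mpr huv
  have hd : ∀ t ∈ Set.uIcc (0:ℝ) 1,
      HasDerivAt (fun t => Afn (v + (u - v) * t) / (u - v)) (eta (v + (u - v) * t)) t := by
    intro t ht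
    rw [Set.uIcc_of_le (by norm_num : (0:ℝ) ≤ 1)] at ht
    have hpos : 0 < v + (u - v) * t := by
      have h0 : v + (u - v) * t = (1 - t) * v + t * u := by ring
      rw [h0]
      rcases lt_or_eq_of_le ht.2 with h | h
      · have := mul_pos (by linarith : (0:ℝ) < 1 - t) hv
        nlinarith [mul_nonneg ht.1 hu.le]
      · subst h; simpa using hu
    have haff : HasDerivAt (fun t : ℝ => v + (u - v) * t) (u - v) t := by
      simpa using ((hasDerivAt_id t).const_mul (u - v)).const_add v
    have := ((hasDerivAt_Afn hpos).comp t haff).div_const (u - v)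
    simpa [mul_comm, mul_div_assoc, mul_div_cancel_left₀ _ hne] using this
  have hcont : IntervalIntegrable (fun t => eta (v + (u - v) * t)) volume 0 1 :=
    (continuous_eta.comp (by continuity)).intervalIntegrable 0 1
  have := intervalIntegral.integral_eq_sub_of_hasDerivAt hd hcont
  rw [this]
  simp
  ring

lemma subF_two_closed (u v : ℝ) (hu : 0 < u) (hv : 0 < v) (huv : u + v = 1) (hne : u ≠ v) :
    subF 2 ![u, v] = (v^2 * Real.log v - u^2 * Real.log u) / (u - v) := by
  rw [subF_two, integral_eta_eq u v hu hv hne]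
  have h : u - v ≠ 0 := sub_ne_zero.mpr hne
  unfold Afn
  field_simp
  nlinarith [sq_nonneg (u-v), sq_nonneg (u+v)]

lemma subF_two_half : subF 2 ![(1:ℝ)/2, 1/2] = Real.log 2 - 1/2 := by
  rw [subF_two]
  norm_num
  unfold eta
  rw [show (1:ℝ)/2 = 2⁻¹ from by norm_num, Real.log_inv]
  ring

lemma log_ineq {u v : ℝ} (hv : 0 < v) (hvu : v < u) (huv : u + v = 1) :
    2 * (u - v) ≤ Real.log u - Real.log v := by
  have hu : 0 < u := lt_trans hv hvu
  have h1 : (∫ t in v..u, t⁻¹) = Real.log u - Real.log v := by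
    rw [integral_inv_of_pos hv hu, Real.log_div hu.ne' hv.ne']
  have h2 : (∫ t in v..u, (4 - 4 * t)) = 2 * (u - v) := by
    rw [intervalIntegral.integral_sub intervalIntegrable_const
      ((intervalIntegral.intervalIntegrable_id).const_mul 4)]
    rw [intervalIntegral.integral_const, intervalIntegral.integral_const_mul,
      integral_id, smul_eq_mul]
    nlinarith
  rw [← h1, ← h2]
  apply intervalIntegral.integral_mono_on hvu.le
  · exact (intervalIntegrable_const.sub ((intervalIntegral.intervalIntegrable_id).const_mul 4))
  · apply intervalIntegral.intervalIntegrable_inv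
    · intro t ht
      rw [Set.uIcc_of_le hvu.le] at ht
      exact (lt_of_lt_of_le hv ht.1).ne'
    · exact continuousOn_id
  · intro t ht
    have htv : v ≤ t := ht.1
    have h0 : 0 < t := lt_of_lt_of_le hv htv
    rw [← sub_nonneg]
    have : t⁻¹ - (4 - 4*t) = (2*t - 1)^2 / t := by field_simp; ring
    rw [this]
    positivity

noncomputable def gfn (x : ℝ) : ℝ :=
  ((1-x)/2)^2 * Real.log ((1-x)/2) - ((1+x)/2)^2 * Real.log ((1+x)/2)

lemma hasDerivAt_phi {z : ℝ} (hz : 0 < z) :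
    HasDerivAt (fun z : ℝ => z^2 * Real.log z) (2*z*Real.log z + z) z := by
  have h1 : HasDerivAt (fun z : ℝ => z^2) (2*z) z := by simpa using hasDerivAt_pow 2 z
  have hlog : HasDerivAt Real.log z⁻¹ z := Real.hasDerivAt_log hz.ne'
  have := h1.mul hlog
  refine this.congr_deriv ?_
  field_simp

lemma hasDerivAt_gfn {x : ℝ} (hx1 : -1 < x) (hx2 : x < 1) :
    HasDerivAt gfn
      (-((1-x)/2) * Real.log ((1-x)/2) - ((1+x)/2) * Real.log ((1+x)/2) - 1/2) x := by
  have hv : 0 < (1-x)/2 := by linarith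
  have hu : 0 < (1+x)/2 := by linarith
  have hv' : HasDerivAt (fun x : ℝ => (1-x)/2) (-(1/2)) x := by
    have : HasDerivAt (fun x : ℝ => (1-x)/2) ((0 - 1)/2) x :=
      ((hasDerivAt_const x (1:ℝ)).sub (hasDerivAt_id x)).div_const 2
    convert this using 1
    norm_num
  have hu' : HasDerivAt (fun x : ℝ => (1+x)/2) ((0+1)/2) x :=
    ((hasDerivAt_const x (1:ℝ)).add (hasDerivAt_id x)).div_const 2
  have h1 := (hasDerivAt_phi hv).comp x hv'
  have h2 := (hasDerivAt_phi hu).comp x hu'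
  have := h1.sub h2
  refine this.congr_deriv ?_
  ring

noncomputable def Khat (x : ℝ) : ℝ :=
  (if x = 0 then Real.log 2 - 1/2 else gfn x / x) + x^2/4

lemma gfn_zero : gfn 0 = 0 := by norm_num [gfn]

lemma gfn_deriv_zero : HasDerivAt gfn (Real.log 2 - 1/2) 0 := by
  have h := hasDerivAt_gfn (x := 0) (by norm_num) (by norm_num)
  convert h using 1
  rw [show ((1:ℝ)-0)/2 = 2⁻¹ by norm_num, show ((1:ℝ)+0)/2 = 2⁻¹ by norm_num, Real.log_inv]
  ring

noncomputable def Kfun (x : ℝ) : ℝ := gfn x / x + x^2/4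

lemma hasDerivAt_Kfun {x : ℝ} (hx0 : 0 < x) (hx1 : x < 1) :
    HasDerivAt Kfun
      (((-((1-x)/2) * Real.log ((1-x)/2) - ((1+x)/2) * Real.log ((1+x)/2) - 1/2) * x
          - gfn x) / x^2 + x/2) x := by
  have h1 := (hasDerivAt_gfn (by linarith : -1 < x) hx1).div (hasDerivAt_id x) hx0.ne'
  have hp : HasDerivAt (fun x : ℝ => x^2) (2*x) x := by simpa using hasDerivAt_pow 2 x
  have h2 : HasDerivAt (fun x : ℝ => x^2/4) (2*x/4) x := hp.div_const 4
  have := h1.add h2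
  refine this.congr_deriv ?_
  have : x ≠ 0 := hx0.ne'
  simp only [id]
  field_simp
  ring

lemma Kfun_deriv_nonneg {x : ℝ} (hx0 : 0 < x) (hx1 : x < 1) :
    0 ≤ ((-((1-x)/2) * Real.log ((1-x)/2) - ((1+x)/2) * Real.log ((1+x)/2) - 1/2) * x
          - gfn x) / x^2 + x/2 := by
  set Lu := Real.log ((1+x)/2)
  set Lv := Real.log ((1-x)/2)
  have key : (-((1-x)/2) * Lv - ((1+x)/2) * Lu - 1/2) * x - gfn x + x^3/2
      = ((1+x)/2) * ((1-x)/2) * ((Lu - Lv) - 2*x) := by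
    unfold gfn; ring
  have hlog := log_ineq (v := (1-x)/2) (u := (1+x)/2) (by linarith) (by linarith) (by ring)
  have hbr : 0 ≤ (Lu - Lv) - 2*x := by
    have : 2 * ((1+x)/2 - (1-x)/2) = 2*x := by ring
    rw [this] at hlog
    linarith
  have hx2 : (0:ℝ) < x^2 := by positivity
  have heq : ((-((1-x)/2) * Lv - ((1+x)/2) * Lu - 1/2) * x - gfn x) / x^2 + x/2
      = (((1+x)/2) * ((1-x)/2) * ((Lu - Lv) - 2*x)) / x^2 := by
    rw [← key]; field_simp
  rw [heq]
  apply div_nonneg _ hx2.le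
  have h1 : (0:ℝ) ≤ (1+x)/2 := by linarith
  have h2 : (0:ℝ) ≤ (1-x)/2 := by linarith
  exact mul_nonneg (mul_nonneg h1 h2) hbr

lemma continuousAt_gfn {x : ℝ} (hx1 : -1 < x) (hx2 : x < 1) : ContinuousAt gfn x :=
  (hasDerivAt_gfn hx1 hx2).continuousAt

lemma Khat_mono {a b : ℝ} (ha : 0 ≤ a) (hab : a ≤ b) (hb : b < 1) : Khat a ≤ Khat b := by
  have hb0 : 0 ≤ b := le_trans ha hab
  have hmono : MonotoneOn Khat (Set.Icc 0 b) := by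
    have hint : interior (Set.Icc 0 b) = Set.Ioo 0 b := interior_Icc
    have hKK : ∀ y : ℝ, y ≠ 0 → Khat y = Kfun y := by
      intro y hy; simp [Khat, Kfun, hy]
    have hev : ∀ x : ℝ, x ≠ 0 → Khat =ᶠ[nhds x] Kfun := by
      intro x hx
      filter_upwards [isOpen_compl_singleton.mem_nhds hx] with y hy
      exact hKK y hy
    apply monotoneOn_of_deriv_nonneg (convex_Icc 0 b)
    · -- continuity
      intro x hx
      rcases eq_or_ne x 0 with rfl | hne
      · rw [← continuousWithinAt_diff_self]
        have hslope : Filter.Tendsto (slope gfn 0) (nhdsWithin 0 {(0:ℝ)}ᶜ)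
            (nhds (Real.log 2 - 1/2)) := hasDerivAt_iff_tendsto_slope.mp gfn_deriv_zero
        have hsq : Filter.Tendsto (fun y : ℝ => y^2/4) (nhdsWithin 0 {(0:ℝ)}ᶜ) (nhds 0) := by
          have hc : Continuous fun y : ℝ => y^2/4 := by continuity
          have := (hc.tendsto 0).mono_left (nhdsWithin_le_nhds (s := {(0:ℝ)}ᶜ))
          simpa using this
        have htot := hslope.add hsq
        have hKhat0 : Khat 0 = Real.log 2 - 1/2 := by simp [Khat]
        unfold ContinuousWithinAt
        rw [hKhat0]
        have hmonole : nhdsWithin (0:ℝ) (Set.Icc 0 b \ {0}) ≤ nhdsWithin 0 {(0:ℝ)}ᶜ :=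
          nhdsWithin_mono _ (fun y hy => hy.2)
        have htot' := (htot.mono_left hmonole)
        rw [add_zero] at htot'
        apply htot'.congr'
        filter_upwards [self_mem_nhdsWithin] with y hy
        have hy0 : y ≠ 0 := hy.2
        rw [hKK y hy0]
        unfold Kfun
        rw [slope_def_field, gfn_zero]
        norm_num
      · have hx0 : 0 < x := lt_of_le_of_ne hx.1 (Ne.symm hne)
        have hxb : x < 1 := lt_of_le_of_lt hx.2 hb
        have hcK : ContinuousAt Kfun x := by
          unfold Kfun
          exact (((continuousAt_gfn (by linarith) hxb).div continuousAt_id hne).add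
            (by fun_prop))
        exact ((continuousAt_congr (hev x hne)).mpr hcK).continuousWithinAt
    · rw [hint]
      intro x hx
      have hxb : x < 1 := lt_of_lt_of_le hx.2 hb.le
      exact ((hasDerivAt_Kfun hx.1 hxb).congr_of_eventuallyEq
        (hev x hx.1.ne')).differentiableAt.differentiableWithinAt
    · rw [hint]
      intro x hx
      have hxb : x < 1 := lt_of_lt_of_le hx.2 hb.le
      have hd := ((hasDerivAt_Kfun hx.1 hxb).congr_of_eventuallyEq
        (hev x hx.1.ne'))
      rw [hd.deriv]
      exact Kfun_deriv_nonneg hx.1 hxb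
  exact hmono ⟨ha, hab.trans (le_refl b)⟩ ⟨hb0, le_refl b⟩ hab

lemma Khat_of_pos {d : ℝ} (hd : 0 < d) : Khat d = gfn d / d + d^2/4 := by
  simp [Khat, hd.ne']

lemma subF_pair (u v : ℝ) (hu : 0 < u) (hv : 0 < v) (huv : u + v = 1) :
    subF 2 ![u, v] = Khat |u - v| - |u - v|^2/4 := by
  rcases lt_trichotomy u v with h | h | h
  · have hd : |u - v| = v - u := by rw [abs_of_neg (by linarith)]; ring
    have hd0 : 0 < v - u := by linarith
    rw [subF_two_closed u v hu hv huv (ne_of_lt h), hd, Khat_of_pos hd0]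
    have e1 : (1-(v-u))/2 = u := by linarith
    have e2 : (1+(v-u))/2 = v := by linarith
    rw [gfn, e1, e2]
    have h1 : u - v ≠ 0 := by intro hc; rw [sub_eq_zero] at hc; exact absurd hc (ne_of_lt h)
    have h2 : v - u ≠ 0 := by intro hc; rw [sub_eq_zero] at hc; exact absurd hc (ne_of_gt h)
    have key : (u^2*Real.log u - v^2*Real.log v)/(v-u)
        = (v^2*Real.log v - u^2*Real.log u)/(u-v) := by
      rw [div_eq_div_iff h2 h1]; ring
    rw [key]; ring
  · have hu2 : u = 1/2 := by linarith
    have hv2 : v = 1/2 := by linarith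
    subst hu2; rw [hv2, show |(1:ℝ)/2 - 1/2| = 0 by norm_num]
    rw [subF_two_half]
    simp [Khat]
  · have hd : |u - v| = u - v := abs_of_pos (by linarith)
    have hd0 : 0 < u - v := by linarith
    rw [subF_two_closed u v hu hv huv (ne_of_gt h), hd, Khat_of_pos hd0]
    have e1 : (1-(u-v))/2 = v := by linarith
    have e2 : (1+(u-v))/2 = u := by linarith
    rw [gfn, e1, e2]
    ring


set_option maxHeartbeats 2000000 in
/-- guessing-probability bound for two pure states:
Q(X|B) = F(p₁,p₂) − F(λ₊,λ₋) ≤ −ln p_guess = H_min(X|B). -/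
theorem conditional_subentropy_le_min_conditional_entropy_two_pure
    (p : ℝ) (hp0 : 0 < p) (hp1 : p < 1) (θ : ℝ) (hθ0 : 0 < θ) (hθπ : θ < Real.pi) :
    subF 2 ![p, 1 - p] -
      subF 2 ![(1 + Real.sqrt (1 - 4 * p * (1 - p) * Real.sin θ ^ 2)) / 2,
               (1 - Real.sqrt (1 - 4 * p * (1 - p) * Real.sin θ ^ 2)) / 2]
      ≤ -Real.log ((1 + Real.sqrt (1 - 4 * p * (1 - p) * Real.cos θ ^ 2)) / 2) := by
  set s := Real.sin θ with hsdef
  clear_value s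
  set c := Real.cos θ with hcdef
  clear_value c
  have hs : 0 < s := by rw [hsdef]; exact Real.sin_pos_of_pos_of_lt_pi hθ0 hθπ
  have hsle : s ≤ 1 := by rw [hsdef]; exact Real.sin_le_one θ
  have hcs : s^2 + c^2 = 1 := by rw [hsdef, hcdef]; exact Real.sin_sq_add_cos_sq θ
  have hp' : 0 < 1 - p := by linarith
  have hq : 0 < 4*p*(1-p) := by positivity
  have hq1 : 4*p*(1-p) ≤ 1 := by nlinarith [sq_nonneg (2*p-1)]
  have hs2pos : 0 < s^2 := pow_pos hs 2
  have hs2le : s^2 ≤ 1 := by nlinarith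
  have hQs : 4*p*(1-p)*s^2 ≤ 1 := by
    calc 4*p*(1-p)*s^2 ≤ 4*p*(1-p)*1 := mul_le_mul_of_nonneg_left hs2le hq.le
      _ ≤ 1 := by linarith
  have hμarg0 : 0 ≤ 1 - 4*p*(1-p)*s^2 := by nlinarith
  set μ := Real.sqrt (1 - 4 * p * (1 - p) * s ^ 2) with hμdef
  clear_value μ
  have hμ0 : 0 ≤ μ := by rw [hμdef]; exact Real.sqrt_nonneg _
  have hμsq : μ^2 = 1 - 4*p*(1-p)*s^2 := by rw [hμdef]; exact Real.sq_sqrt hμarg0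
  have hμ1 : μ < 1 := by
    have h := Real.sqrt_lt_sqrt hμarg0 (show 1 - 4*p*(1-p)*s^2 < 1 by nlinarith)
    rw [hμdef]
    rwa [Real.sqrt_one] at h
  have hL1 : 0 < (1+μ)/2 := by linarith
  have hL2 : 0 < (1-μ)/2 := by linarith
  have hsubL := subF_pair ((1+μ)/2) ((1-μ)/2) hL1 hL2 (by ring : (1+μ)/2 + (1-μ)/2 = 1)
  have habsμ : |(1+μ)/2 - (1-μ)/2| = μ := by
    rw [show (1+μ)/2 - (1-μ)/2 = μ by ring, abs_of_nonneg hμ0]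
  rw [habsμ] at hsubL
  have hsubp := subF_pair p (1-p) hp0 hp' (by ring)
  set d := |p - (1-p)| with hddef
  clear_value d
  have hd0 : 0 ≤ d := by rw [hddef]; exact abs_nonneg _
  have hdsq : d^2 = 1 - 4*p*(1-p) := by rw [hddef, sq_abs]; ring
  have hdμ : d ≤ μ := by
    have h1 : d = Real.sqrt (1 - 4*p*(1-p)) := by rw [← hdsq, Real.sqrt_sq hd0]
    rw [h1, hμdef]
    exact Real.sqrt_le_sqrt (by nlinarith)
  have hmon := Khat_mono hd0 hdμ hμ1
  have hc2 : c^2 ≤ 1 := by nlinarith [hs2pos]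
  have hQc : 4*p*(1-p)*c^2 ≤ 1 := by
    calc 4*p*(1-p)*c^2 ≤ 4*p*(1-p)*1 := by
          apply mul_le_mul_of_nonneg_left hc2 hq.le
      _ ≤ 1 := by linarith
  have hνarg0 : 0 ≤ 1 - 4*p*(1-p)*c^2 := by
    have h0 : 0 ≤ 4*p*(1-p)*c^2 := by positivity
    linarith [hQc]
  set ν := Real.sqrt (1 - 4 * p * (1 - p) * c ^ 2) with hνdef
  clear_value ν
  have hν0 : 0 ≤ ν := by rw [hνdef]; exact Real.sqrt_nonneg _
  have hνsq : ν^2 = 1 - 4*p*(1-p)*c^2 := by rw [hνdef]; exact Real.sq_sqrt hνarg0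
  have hν1 : ν ≤ 1 := by
    rw [hνdef]
    apply Real.sqrt_le_one.mpr
    have h0 : 0 ≤ 4*p*(1-p)*c^2 := by positivity
    linarith
  have hlog := Real.log_le_sub_one_of_pos (show (0:ℝ) < (1+ν)/2 by linarith)
  rw [hsubp, hsubL]
  clear hsubp hsubL habsμ hμdef hνdef hddef hsdef hcdef
  set A := Khat d with hA
  clear_value A
  set B := Khat μ with hB
  clear_value B
  clear hA hB
  have h2 : (μ^2 - d^2)/4 = 4*p*(1-p)*c^2/4 := by
    rw [hμsq, hdsq]
    linear_combination (-(p*(1-p))) * hcs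
  have h3 : 4*p*(1-p)*c^2/4 ≤ -Real.log ((1+ν)/2) := by
    have e2 : (1-ν)*(1+ν)/4 ≤ (1-ν)/2 := by nlinarith [sq_nonneg (1-ν)]
    have e3 : (1-ν)*(1+ν)/4 = 4*p*(1-p)*c^2/4 := by linear_combination (-(1:ℝ)/4) * hνsq
    linarith
  linarith
end

section
/- Operational formula for classical subentropy: let p = (p_1, …, p_n) ∈ Δ_n be a probability vector. For t ∈ Δ_n define the cyclic stochastic matrix Λ_t with entries (Λ_t)_{ji} = t_{(j−i) mod n}. Then Σ_{i=1}^n p_i ∫_{Δ_n} Σ_{j=1}^n t_{(j−i) mod n} · ln( t_{(j−i) mod n} / ( Σ_{k=1}^n t_{(j−k) mod n} p_k ) ) dt = F(p), i.e. the average over the uniformly distributed cyclic stochastic maps of the mean Kullback–Leibler divergence Σ_i p_i D(Λ_t(δ_i) ‖ Λ_t(p)) equals the subentropy F(p). -/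
open MeasureTheory Matrix
open scoped ComplexOrder

namespace SubP

variable {m : ℕ}

def Sset (m : ℕ) : Set (Fin m → ℝ) := {y | (∀ i, 0 ≤ y i) ∧ ∑ i, y i ≤ 1}

noncomputable def cmap (m : ℕ) (y : Fin m → ℝ) : Fin (m + 1) → ℝ :=
  fun i => if h : (i : ℕ) < m then y ⟨i, h⟩ else 1 - ∑ j, y j

lemma cmap_castSucc (y : Fin m → ℝ) (k : Fin m) : cmap m y k.castSucc = y k := by
  simp [cmap]

lemma cmap_last (y : Fin m → ℝ) : cmap m y (Fin.last m) = 1 - ∑ j, y j := by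
  simp [cmap]

lemma sum_cmap (y : Fin m → ℝ) : ∑ i, cmap m y i = 1 := by
  rw [Fin.sum_univ_castSucc]
  simp [cmap_castSucc, cmap_last]

noncomputable def T (σ : Equiv.Perm (Fin (m + 1))) (y : Fin m → ℝ) : Fin m → ℝ :=
  fun k => cmap m y (σ k.castSucc)

lemma sum_comp_perm (σ : Equiv.Perm (Fin (m + 1))) (y : Fin m → ℝ) :
    ∑ k : Fin m, cmap m y (σ k.castSucc) = 1 - cmap m y (σ (Fin.last m)) := by
  have h : ∑ i, cmap m y (σ i) = 1 := by
    rw [Equiv.sum_comp σ (cmap m y), sum_cmap]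
  rw [Fin.sum_univ_castSucc] at h
  linarith

lemma cmap_T (σ : Equiv.Perm (Fin (m + 1))) (y : Fin m → ℝ) :
    cmap m (T σ y) = fun i => cmap m y (σ i) := by
  funext i
  induction i using Fin.lastCases with
  | last =>
      rw [cmap_last]
      have : ∑ j, T σ y j = 1 - cmap m y (σ (Fin.last m)) := sum_comp_perm σ y
      rw [this]; ring
  | cast k => rw [cmap_castSucc]; rfl


lemma T_trans (σ τ : Equiv.Perm (Fin (m + 1))) (y : Fin m → ℝ) :
    T σ (T τ y) = T (σ.trans τ) y := by
  funext k
  show cmap m (T τ y) (σ k.castSucc) = _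
  rw [cmap_T]
  rfl

lemma T_one (y : Fin m → ℝ) : T 1 y = y := by
  funext k
  show cmap m y ((1 : Equiv.Perm (Fin (m + 1))) k.castSucc) = y k
  rw [Equiv.Perm.one_apply, cmap_castSucc]

noncomputable def Lmap (σ : Equiv.Perm (Fin (m + 1))) : (Fin m → ℝ) →ₗ[ℝ] (Fin m → ℝ) where
  toFun y := T σ y - T σ 0
  map_add' y z := by
    funext k
    simp only [T, cmap, Pi.sub_apply, Pi.add_apply]
    by_cases h : ((σ k.castSucc : Fin (m + 1)) : ℕ) < m
    · simp [h]
    · simp [h, Finset.sum_add_distrib]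
      try ring
  map_smul' c y := by
    funext k
    simp only [T, cmap, Pi.sub_apply, Pi.smul_apply, smul_eq_mul, RingHom.id_apply]
    by_cases h : ((σ k.castSucc : Fin (m + 1)) : ℕ) < m
    · simp [h]
    · simp [h, Finset.mul_sum]
      try ring

lemma T_eq (σ : Equiv.Perm (Fin (m + 1))) (y : Fin m → ℝ) :
    T σ y = Lmap σ y + T σ 0 := by
  show T σ y = (T σ y - T σ 0) + T σ 0
  abel

lemma Lmap_apply (σ : Equiv.Perm (Fin (m + 1))) (y : Fin m → ℝ) :
    Lmap σ y = T σ y - T σ 0 := rfl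

lemma Lmap_trans (σ τ : Equiv.Perm (Fin (m + 1))) :
    Lmap (σ.trans τ) = (Lmap σ).comp (Lmap τ) := by
  apply LinearMap.ext
  intro y
  show T (σ.trans τ) y - T (σ.trans τ) 0 = Lmap σ (Lmap τ y)
  have h1 : Lmap σ (Lmap τ y) = Lmap σ (T τ y) - Lmap σ (T τ 0) := by
    rw [Lmap_apply τ, map_sub]
  rw [h1, Lmap_apply σ (T τ y), Lmap_apply σ (T τ 0), ← T_trans, ← T_trans]
  abel

lemma Lmap_one : Lmap (m := m) 1 = LinearMap.id := by
  apply LinearMap.ext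
  intro y
  show T 1 y - T 1 0 = y
  rw [T_one, T_one]; simp

lemma det_Lmap_pow (σ : Equiv.Perm (Fin (m + 1))) (k : ℕ) :
    LinearMap.det (Lmap (σ ^ k)) = (LinearMap.det (Lmap σ)) ^ k := by
  induction k with
  | zero => simp [pow_zero, Lmap_one]
  | succ k ih =>
      have h : σ ^ (k + 1) = σ.trans (σ ^ k) := by
        rw [pow_succ]; rfl
      rw [h, Lmap_trans, LinearMap.det_comp, ih, pow_succ]
      ring

lemma abs_det_Lmap (σ : Equiv.Perm (Fin (m + 1))) :
    |LinearMap.det (Lmap σ)| = 1 := by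
  set d := LinearMap.det (Lmap σ) with hd
  have hN : 0 < orderOf σ := orderOf_pos σ
  have h1 : d ^ orderOf σ = 1 := by
    rw [← det_Lmap_pow, pow_orderOf_eq_one, Lmap_one, LinearMap.det_id]
  have h2 : |d| ^ orderOf σ = 1 := by rw [← abs_pow, h1, abs_one]
  rcases lt_trichotomy |d| 1 with h | h | h
  · exfalso
    have := pow_lt_one₀ (abs_nonneg d) h hN.ne'
    rw [h2] at this; exact lt_irrefl 1 this
  · exact h
  · exfalso
    have := one_lt_pow₀ h hN.ne'
    rw [h2] at this; exact lt_irrefl 1 this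

lemma measurePreserving_Lmap (σ : Equiv.Perm (Fin (m + 1))) :
    MeasurePreserving (Lmap (m := m) σ) volume volume := by
  refine ⟨(Lmap σ).continuous_of_finiteDimensional.measurable, ?_⟩
  have hd : LinearMap.det (Lmap σ) ≠ 0 := by
    intro h
    have := abs_det_Lmap σ
    rw [h, abs_zero] at this
    norm_num at this
  rw [Real.map_linearMap_volume_pi_eq_smul_volume_pi hd, abs_inv, abs_det_Lmap σ]
  simp

lemma measurePreserving_T (σ : Equiv.Perm (Fin (m + 1))) :
    MeasurePreserving (T (m := m) σ) volume volume := by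
  have h : T (m := m) σ = (fun v => v + T σ 0) ∘ (Lmap σ) := by
    funext y
    show T σ y = Lmap σ y + T σ 0
    exact T_eq σ y
  rw [h]
  exact (measurePreserving_add_right volume (T σ 0)).comp (measurePreserving_Lmap σ)

noncomputable def Tequiv (σ : Equiv.Perm (Fin (m + 1))) : (Fin m → ℝ) ≃ᵐ (Fin m → ℝ) where
  toFun := T σ
  invFun := T σ⁻¹
  left_inv y := by
    rw [T_trans]
    have h : (σ⁻¹).trans σ = 1 := by
      apply Equiv.ext; intro x
      show σ (σ⁻¹ x) = x
      exact Equiv.apply_symm_apply σ x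
    rw [h, T_one]
  right_inv y := by
    rw [T_trans]
    have h : σ.trans σ⁻¹ = 1 := by
      apply Equiv.ext; intro x
      show σ⁻¹ (σ x) = x
      exact Equiv.symm_apply_apply σ x
    rw [h, T_one]
  measurable_toFun := (measurePreserving_T σ).measurable
  measurable_invFun := (measurePreserving_T σ⁻¹).measurable

lemma cmap_nonneg {y : Fin m → ℝ} (hy : y ∈ Sset m) (i : Fin (m + 1)) :
    0 ≤ cmap m y i := by
  unfold cmap
  split
  · exact hy.1 _
  · linarith [hy.2]

lemma T_mem_S (σ : Equiv.Perm (Fin (m + 1))) {y : Fin m → ℝ} (hy : y ∈ Sset m) :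
    T σ y ∈ Sset m := by
  constructor
  · intro k; exact cmap_nonneg hy _
  · have hsum : ∑ i, T σ y i = 1 - cmap m y (σ (Fin.last m)) := sum_comp_perm σ y
    rw [hsum]
    linarith [cmap_nonneg hy (σ (Fin.last m))]

lemma T_preimage_S (σ : Equiv.Perm (Fin (m + 1))) : T σ ⁻¹' Sset m = Sset m := by
  ext y
  constructor
  · intro h
    have h2 := T_mem_S σ⁻¹ h
    rwa [T_trans, show (σ⁻¹).trans σ = 1 from Equiv.ext fun x => Equiv.apply_symm_apply σ x,
      T_one] at h2
  · exact T_mem_S σ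

lemma perm_inv (σ : Equiv.Perm (Fin (m + 1))) (f : (Fin (m + 1) → ℝ) → ℝ) :
    ∫ y in Sset m, f (fun i => cmap m y (σ i)) = ∫ y in Sset m, f (cmap m y) := by
  have h1 := (measurePreserving_T σ).setIntegral_preimage_emb
    (Tequiv σ).measurableEmbedding (fun x => f (cmap m x)) (Sset m)
  rw [T_preimage_S] at h1
  simp only [cmap_T] at h1
  rw [← h1]



lemma harmC_succ (n : ℕ) (hn : 1 ≤ n) : harmC (n + 1) = harmC n + 1 / (n + 1) := by
  unfold harmC
  rw [Finset.sum_Icc_succ_top (by omega : 2 ≤ n + 1)]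
  push_cast
  ring_nf

lemma oneD (k : ℕ) (a : ℝ) (ha : 0 ≤ a) :
    ∫ u in (0:ℝ)..a, u ^ (k + 1) * Real.log u
      = a ^ (k + 2) * Real.log a / (k + 2) - a ^ (k + 2) / ((k : ℝ) + 2) ^ 2 := by
  rcases eq_or_lt_of_le ha with rfl | ha
  · simp
  set F : ℝ → ℝ := fun u => u ^ (k + 1) * (u * Real.log u) / ((k : ℝ) + 2)
      - u ^ (k + 2) / (((k : ℝ) + 2) ^ 2) with hF
  have hk2 : ((k : ℝ) + 2) ≠ 0 := by positivity
  have hcont : Continuous F :=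
    (((continuous_pow (k + 1)).mul Real.continuous_mul_log).div_const _).sub
      ((continuous_pow (k + 2)).div_const _)
  have hcont2 : Continuous fun u : ℝ => u ^ (k + 1) * Real.log u := by
    have : (fun u : ℝ => u ^ (k + 1) * Real.log u) = fun u => u ^ k * (u * Real.log u) := by
      funext u; ring
    rw [this]
    exact (continuous_pow k).mul Real.continuous_mul_log
  have hderiv : ∀ x ∈ Set.Ioo (0:ℝ) a, HasDerivAt F (x ^ (k + 1) * Real.log x) x := by
    intro x hx
    have hx0 : x ≠ 0 := ne_of_gt hx.1
    have h1 : HasDerivAt (fun u : ℝ => u ^ (k + 2)) (((k : ℝ) + 2) * x ^ (k + 1)) x := by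
      have := hasDerivAt_pow (k + 2) x
      convert this using 2 <;> push_cast <;> rfl
    have h2 : HasDerivAt Real.log x⁻¹ x := Real.hasDerivAt_log hx0
    have h3 : HasDerivAt (fun u : ℝ => u ^ (k + 2) * Real.log u)
        (((k : ℝ) + 2) * x ^ (k + 1) * Real.log x + x ^ (k + 2) * x⁻¹) x := h1.mul h2
    have hFG : F = fun u : ℝ => u ^ (k + 2) * Real.log u / ((k : ℝ) + 2)
        - u ^ (k + 2) / (((k : ℝ) + 2) ^ 2) := by
      funext u; rw [hF]; ring
    rw [hFG]
    have h4 := (h3.div_const ((k : ℝ) + 2)).sub (h1.div_const (((k : ℝ) + 2) ^ 2))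
    refine h4.congr_deriv ?_
    field_simp
    ring
  have key := intervalIntegral.integral_eq_sub_of_hasDeriv_right_of_le (le_of_lt ha)
    (hcont.continuousOn) (fun x hx => (hderiv x hx).hasDerivWithinAt)
    (hcont2.intervalIntegrable 0 a)
  rw [key, hF]
  simp only []
  rw [Real.log_zero]
  field_simp
  ring
end SubP

namespace SubP

def Tset (M : ℕ) (a : ℝ) : Set (Fin M → ℝ) := {y | (∀ i, 0 ≤ y i) ∧ ∑ i, y i ≤ a}

lemma isClosed_Tset (M : ℕ) (a : ℝ) : IsClosed (Tset M a) := by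
  have h : Tset M a = (⋂ i, {y : Fin M → ℝ | 0 ≤ y i}) ∩ {y : Fin M → ℝ | ∑ i, y i ≤ a} := by
    ext y; simp [Tset, Set.mem_iInter]
  rw [h]
  exact (isClosed_iInter fun i => isClosed_le continuous_const (continuous_apply i)).inter
    (isClosed_le (by continuity) continuous_const)

lemma measurableSet_Tset (M : ℕ) (a : ℝ) : MeasurableSet (Tset M a) :=
  (isClosed_Tset M a).measurableSet

lemma isCompact_Tset (M : ℕ) (a : ℝ) : IsCompact (Tset M a) := by
  apply (isCompact_Icc (a := (0 : Fin M → ℝ)) (b := fun _ => a)).of_isClosed_subset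
    (isClosed_Tset M a)
  intro y hy
  constructor
  · intro i; exact hy.1 i
  · intro i
    calc y i ≤ ∑ j, y j := Finset.single_le_sum (fun j _ => hy.1 j) (Finset.mem_univ i)
    _ ≤ a := hy.2

lemma integrableOn_Tset {M : ℕ} {a : ℝ} {f : (Fin M → ℝ) → ℝ} (hf : Continuous f) :
    IntegrableOn f (Tset M a) :=
  hf.continuousOn.integrableOn_compact (isCompact_Tset M a)

lemma layer (M : ℕ) : ∀ a : ℝ, 0 ≤ a →
    ∫ y in Tset M a, (a - ∑ i, y i) * Real.log (a - ∑ i, y i)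
      = a ^ (M + 1) / (M + 1).factorial * (Real.log a - harmC (M + 1)) := by
  induction M with
  | zero =>
      intro a ha
      have huniv : Tset 0 a = Set.univ := by
        ext y
        simp [Tset, ha]
      rw [huniv, Measure.restrict_univ]
      have h1 : (volume : Measure (Fin 0 → ℝ)) = Measure.dirac 0 := by
        rw [show (volume : Measure (Fin 0 → ℝ)) = Measure.pi (fun _ => volume) from rfl,
          Measure.pi_of_empty]
        congr
        funext i
        exact absurd i.2 (by omega)
      rw [h1, integral_dirac]
      have : harmC 1 = 0 := by simp [harmC]
      simp [this]
  | succ M IH =>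
      intro a ha
      have hfc : Continuous fun y : Fin (M + 1) → ℝ =>
          (a - ∑ i, y i) * Real.log (a - ∑ i, y i) :=
        Real.continuous_mul_log.comp (continuous_const.sub (by continuity))
      set G : (Fin (M + 1) → ℝ) → ℝ :=
        (Tset (M + 1) a).indicator
          (fun y => (a - ∑ i, y i) * Real.log (a - ∑ i, y i)) with hG
      have hGint : Integrable G := by
        rw [hG, integrable_indicator_iff (measurableSet_Tset _ _)]
        exact integrableOn_Tset hfc
      have h1 : (∫ y in Tset (M + 1) a, (a - ∑ i, y i) * Real.log (a - ∑ i, y i))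
          = ∫ y, G y := by
        rw [hG, integral_indicator (measurableSet_Tset _ _)]
      set e := MeasurableEquiv.piFinSuccAbove (fun _ : Fin (M + 1) => ℝ) 0 with he
      have hmp := (volume_preserving_piFinSuccAbove (fun _ : Fin (M + 1) => ℝ) 0).symm
      have hcons : ∀ (x : ℝ) (z : Fin M → ℝ), e.symm (x, z) = Fin.cons x z := by
        intro x z
        show (MeasurableEquiv.piFinSuccAbove (fun _ : Fin (M + 1) => ℝ) 0).symm (x, z) = _
        simp only [MeasurableEquiv.piFinSuccAbove_symm_apply, Fin.insertNthEquiv,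
          Equiv.coe_fn_mk, Fin.insertNth_zero']
      have h2 : ∫ y, G y = ∫ z : ℝ × (Fin M → ℝ), G (e.symm z) :=
        (hmp.integral_comp e.symm.measurableEmbedding G).symm
      have hGe : Integrable (fun z : ℝ × (Fin M → ℝ) => G (e.symm z)) :=
        (hmp.integrable_comp_emb e.symm.measurableEmbedding).mpr hGint
      have h3 : ∫ z : ℝ × (Fin M → ℝ), G (e.symm z)
          = ∫ x : ℝ, ∫ z : Fin M → ℝ, G (e.symm (x, z)) := by
        rw [Measure.volume_eq_prod] at hGe ⊢
        exact integral_prod _ hGe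
      have hinner : ∀ x : ℝ, (∫ z : Fin M → ℝ, G (e.symm (x, z)))
          = Set.indicator (Set.Icc 0 a)
              (fun x => (a - x) ^ (M + 1) / (M + 1).factorial
                * (Real.log (a - x) - harmC (M + 1))) x := by
        intro x
        by_cases hx : x ∈ Set.Icc (0:ℝ) a
        · have hx0 := hx.1
          have hxa := hx.2
          have hmem : ∀ z : Fin M → ℝ,
              (Fin.cons x z ∈ Tset (M + 1) a) ↔ z ∈ Tset M (a - x) := by
            intro z
            constructor
            · rintro ⟨hz1, hz2⟩
              refine ⟨fun i => by simpa using hz1 i.succ, ?_⟩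
              rw [Fin.sum_univ_succ, Fin.cons_zero] at hz2
              simp only [Fin.cons_succ] at hz2
              linarith
            · rintro ⟨hz1, hz2⟩
              constructor
              · intro i
                induction i using Fin.cases with
                | zero => simpa using hx0
                | succ j => simpa using hz1 j
              · rw [Fin.sum_univ_succ, Fin.cons_zero]
                simp only [Fin.cons_succ]
                linarith
          have heq : (fun z : Fin M → ℝ => G (e.symm (x, z)))
              = (Tset M (a - x)).indicator
                  (fun z => ((a - x) - ∑ i, z i) * Real.log ((a - x) - ∑ i, z i)) := by
            funext z
            rw [hcons, hG]
            by_cases hz : z ∈ Tset M (a - x)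
            · rw [Set.indicator_of_mem hz, Set.indicator_of_mem ((hmem z).mpr hz)]
              have hsum : a - ∑ i, Fin.cons x z i = (a - x) - ∑ i, z i := by
                rw [Fin.sum_univ_succ, Fin.cons_zero]
                simp only [Fin.cons_succ]
                ring
              rw [hsum]
            · rw [Set.indicator_of_notMem hz,
                Set.indicator_of_notMem (fun h => hz ((hmem z).mp h))]
          rw [Set.indicator_of_mem hx, heq, integral_indicator (measurableSet_Tset _ _)]
          exact IH (a - x) (by linarith)
        · rw [Set.indicator_of_notMem hx]
          have hzero : (fun z : Fin M → ℝ => G (e.symm (x, z))) = fun _ => (0:ℝ) := by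
            funext z
            rw [hcons, hG, Set.indicator_of_notMem]
            rintro ⟨h1', h2'⟩
            have hx0 : 0 ≤ x := by simpa using h1' 0
            rw [Fin.sum_univ_succ, Fin.cons_zero] at h2'
            simp only [Fin.cons_succ] at h2'
            have hsz : 0 ≤ ∑ i, z i := Finset.sum_nonneg fun i _ => by simpa using h1' i.succ
            exact hx ⟨hx0, by linarith⟩
          rw [hzero, integral_zero]
      have h4 : (∫ x : ℝ, ∫ z : Fin M → ℝ, G (e.symm (x, z)))
          = ∫ x in (0:ℝ)..a, (a - x) ^ (M + 1) / (M + 1).factorial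
              * (Real.log (a - x) - harmC (M + 1)) := by
        rw [integral_congr_ae (Filter.Eventually.of_forall hinner),
          integral_indicator measurableSet_Icc, integral_Icc_eq_integral_Ioc,
          intervalIntegral.integral_of_le ha]
      have h5 : (∫ x in (0:ℝ)..a, (a - x) ^ (M + 1) / (M + 1).factorial
              * (Real.log (a - x) - harmC (M + 1)))
          = ∫ u in (0:ℝ)..a, u ^ (M + 1) / (M + 1).factorial
              * (Real.log u - harmC (M + 1)) := by
        rw [intervalIntegral.integral_comp_sub_left
          (fun u => u ^ (M + 1) / (M + 1).factorial * (Real.log u - harmC (M + 1))) a]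
        norm_num
      have hcontPL : Continuous fun u : ℝ => u ^ (M + 1) * Real.log u := by
        have hh : (fun u : ℝ => u ^ (M + 1) * Real.log u)
            = fun u => u ^ M * (u * Real.log u) := by funext u; ring
        rw [hh]
        exact (continuous_pow M).mul Real.continuous_mul_log
      have h6 : (∫ u in (0:ℝ)..a, u ^ (M + 1) / (M + 1).factorial
              * (Real.log u - harmC (M + 1)))
          = (∫ u in (0:ℝ)..a, u ^ (M + 1) * Real.log u) / (M + 1).factorial
            - (∫ u in (0:ℝ)..a, u ^ (M + 1)) * (harmC (M + 1) / (M + 1).factorial) := by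
        have hsp : (fun u : ℝ => u ^ (M + 1) / (M + 1).factorial
              * (Real.log u - harmC (M + 1)))
            = fun u => (u ^ (M + 1) * Real.log u) * (1 / (M + 1).factorial)
              - u ^ (M + 1) * (harmC (M + 1) / (M + 1).factorial) := by
          funext u; field_simp
        rw [hsp, intervalIntegral.integral_sub
            ((hcontPL.intervalIntegrable 0 a).mul_const _)
            (((continuous_pow (M + 1)).intervalIntegrable 0 a).mul_const _),
          intervalIntegral.integral_mul_const, intervalIntegral.integral_mul_const]
        ring
      rw [h1, h2, h3, h4, h5, h6, oneD M a ha, integral_pow]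
      have hfac : ((M + 1 + 1).factorial : ℝ) = ((M + 1 : ℕ) + 1) * (M + 1).factorial := by
        rw [Nat.factorial_succ]; push_cast; ring
      have hharm : harmC (M + 1 + 1) = harmC (M + 1) + 1 / ((M : ℝ) + 2) := by
        rw [harmC_succ (M + 1) (by omega)]; push_cast; ring_nf
      rw [hfac, hharm]
      have hfacpos : (0:ℝ) < (M + 1).factorial := by positivity
      push_cast
      field_simp
      ring

end SubP

namespace SubP

noncomputable def Lw (m : ℕ) (p : Fin (m + 1) → ℝ) (j : Fin (m + 1)) (t : Fin (m + 1) → ℝ) : ℝ :=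
  ∑ k, t (j - k) * p k

noncomputable def Afun (m : ℕ) (t : Fin (m + 1) → ℝ) : ℝ := ∑ j, t j * Real.log (t j)

noncomputable def fI (m : ℕ) (p : Fin (m + 1) → ℝ) (i : Fin (m + 1))
    (t : Fin (m + 1) → ℝ) : ℝ :=
  ∑ j, t (j - i) * Real.log (t (j - i) / Lw m p j t)

variable {m : ℕ} {p : Fin (m + 1) → ℝ}

lemma continuous_cmap : Continuous (cmap m) := by
  apply continuous_pi
  intro i
  unfold cmap
  by_cases h : (i : ℕ) < m
  · simp only [dif_pos h]; exact continuous_apply _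
  · simp only [dif_neg h]
    exact continuous_const.sub (by continuity)

lemma continuous_Lw (j : Fin (m + 1)) : Continuous (Lw m p j) :=
  continuous_finset_sum _ fun k _ => (continuous_apply _).mul continuous_const

lemma cmap_le_one {y : Fin m → ℝ} (hy : y ∈ Sset m) (i : Fin (m + 1)) : cmap m y i ≤ 1 := by
  calc cmap m y i ≤ ∑ j, cmap m y j :=
        Finset.single_le_sum (fun j _ => cmap_nonneg hy j) (Finset.mem_univ i)
  _ = 1 := sum_cmap y

lemma Lw_nonneg (hp : ∀ i, 0 ≤ p i) {y : Fin m → ℝ} (hy : y ∈ Sset m) (j : Fin (m + 1)) :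
    0 ≤ Lw m p j (cmap m y) :=
  Finset.sum_nonneg fun k _ => mul_nonneg (cmap_nonneg hy _) (hp k)

lemma Lw_le_one (hp : ∀ i, 0 ≤ p i) (hps : ∑ i, p i = 1) {y : Fin m → ℝ} (hy : y ∈ Sset m)
    (j : Fin (m + 1)) : Lw m p j (cmap m y) ≤ 1 := by
  calc Lw m p j (cmap m y) ≤ ∑ k, p k := by
        apply Finset.sum_le_sum
        intro k _
        have h1 := cmap_le_one hy (j - k)
        have h2 := cmap_nonneg hy (j - k)
        nlinarith [hp k]
  _ = 1 := hps

lemma Lw_ge (hp : ∀ i, 0 ≤ p i) {y : Fin m → ℝ} (hy : y ∈ Sset m) (i j : Fin (m + 1)) :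
    cmap m y (j - i) * p i ≤ Lw m p j (cmap m y) :=
  Finset.single_le_sum (f := fun k => cmap m y (j - k) * p k)
    (fun k _ => mul_nonneg (cmap_nonneg hy _) (hp k)) (Finset.mem_univ i)

lemma fI_eq_sub (hp : ∀ i, 0 ≤ p i) {i : Fin (m + 1)} (hpi : 0 < p i) {y : Fin m → ℝ}
    (hy : y ∈ Sset m) :
    fI m p i (cmap m y) = Afun m (cmap m y)
      - ∑ j, cmap m y (j - i) * Real.log (Lw m p j (cmap m y)) := by
  have hterm : ∀ j : Fin (m + 1),
      cmap m y (j - i) * Real.log (cmap m y (j - i) / Lw m p j (cmap m y))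
      = cmap m y (j - i) * Real.log (cmap m y (j - i))
        - cmap m y (j - i) * Real.log (Lw m p j (cmap m y)) := by
    intro j
    rcases eq_or_lt_of_le (cmap_nonneg hy (j - i)) with h0 | h0
    · rw [← h0]; ring
    · have hL : 0 < Lw m p j (cmap m y) :=
        lt_of_lt_of_le (mul_pos h0 hpi) (Lw_ge hp hy i j)
      rw [Real.log_div (ne_of_gt h0) (ne_of_gt hL)]
      ring
  unfold fI
  rw [Finset.sum_congr rfl fun j _ => hterm j, Finset.sum_sub_distrib]
  congr 1
  have h := Equiv.sum_comp (Equiv.subRight i) (fun u => cmap m y u * Real.log (cmap m y u))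
  simp only [Equiv.subRight_apply] at h
  exact h

lemma sum_B_eq (t : Fin (m + 1) → ℝ) :
    ∑ i, p i * ∑ j, t (j - i) * Real.log (Lw m p j t)
      = ∑ j, Lw m p j t * Real.log (Lw m p j t) := by
  calc ∑ i, p i * ∑ j, t (j - i) * Real.log (Lw m p j t)
      = ∑ i, ∑ j, p i * (t (j - i) * Real.log (Lw m p j t)) := by
        exact Finset.sum_congr rfl fun i _ => Finset.mul_sum _ _ _
    _ = ∑ j, ∑ i, p i * (t (j - i) * Real.log (Lw m p j t)) := Finset.sum_comm
    _ = ∑ j, Lw m p j t * Real.log (Lw m p j t) := by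
        refine Finset.sum_congr rfl fun j _ => ?_
        rw [show Lw m p j t * Real.log (Lw m p j t)
            = (∑ k, t (j - k) * p k) * Real.log (Lw m p j t) from rfl, Finset.sum_mul]
        exact Finset.sum_congr rfl fun i _ => by ring

lemma coord_integral (i : Fin (m + 1)) :
    ∫ y in Sset m, cmap m y i * Real.log (cmap m y i)
      = -harmC (m + 1) / (m + 1).factorial := by
  have h := perm_inv (Equiv.swap i (Fin.last m))
    (fun x => x (Fin.last m) * Real.log (x (Fin.last m)))
  simp only [Equiv.swap_apply_right] at h
  rw [h]
  simp only [cmap_last]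
  have hl := layer m 1 (by norm_num)
  rw [show Sset m = Tset m 1 from rfl, hl]
  simp [Real.log_one]
  ring

lemma measurable_fIc (i : Fin (m + 1)) :
    Measurable fun y : Fin m → ℝ => fI m p i (cmap m y) := by
  unfold fI
  apply Finset.measurable_sum
  intro j _
  have h1 : Measurable fun y : Fin m → ℝ => cmap m y (j - i) :=
    ((continuous_apply _).comp continuous_cmap).measurable
  have h2 : Measurable fun y : Fin m → ℝ => Lw m p j (cmap m y) :=
    ((continuous_Lw j).comp continuous_cmap).measurable
  exact h1.mul (Real.measurable_log.comp (h1.div h2))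

lemma integrableOn_fIc (hp : ∀ i, 0 ≤ p i) (hps : ∑ i, p i = 1) {i : Fin (m + 1)}
    (hpi : 0 < p i) :
    IntegrableOn (fun y => fI m p i (cmap m y)) (Sset m) volume := by
  set C : ℝ := 2 + |Real.log (p i)| with hC
  have hbound : ∀ y ∈ Sset m, ‖fI m p i (cmap m y)‖ ≤ (m + 1 : ℝ) * C := by
    intro y hy
    have hterm : ∀ j : Fin (m + 1),
        |cmap m y (j - i) * Real.log (cmap m y (j - i) / Lw m p j (cmap m y))| ≤ C := by
      intro j
      set d := cmap m y (j - i) with hd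
      set L := Lw m p j (cmap m y) with hL
      have hd0 : 0 ≤ d := cmap_nonneg hy _
      have hd1 : d ≤ 1 := cmap_le_one hy _
      have hL1 : L ≤ 1 := Lw_le_one hp hps hy j
      rcases eq_or_lt_of_le hd0 with h0 | h0
      · rw [← h0]
        simp only [zero_mul, abs_zero, hC]
        positivity
      · have hLpos : 0 < L := lt_of_lt_of_le (mul_pos h0 hpi) (Lw_ge hp hy i j)
        rw [Real.log_div (ne_of_gt h0) (ne_of_gt hLpos), mul_sub]
        have e1 : |d * Real.log d - d * Real.log L| ≤ |d * Real.log d| + |d * Real.log L| :=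
          abs_sub _ _
        have e2 : |d * Real.log d| ≤ 1 := by
          have h2 := Real.abs_log_mul_self_lt d h0 hd1
          calc |d * Real.log d| = |Real.log d * d| := by rw [mul_comm]
          _ ≤ 1 := le_of_lt h2
        have e3 : |d * Real.log L| ≤ |Real.log (p i)| + 1 := by
          have hlogL : |Real.log L| = -Real.log L :=
            abs_of_nonpos (Real.log_nonpos hLpos.le hL1)
          have hmono : Real.log (d * p i) ≤ Real.log L :=
            Real.log_le_log (mul_pos h0 hpi) (Lw_ge hp hy i j)
          have hsplit : Real.log (d * p i) = Real.log d + Real.log (p i) :=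
            Real.log_mul (ne_of_gt h0) (ne_of_gt hpi)
          have habs : |d * Real.log L| = d * (-Real.log L) := by
            rw [abs_mul, abs_of_nonneg hd0, hlogL]
          rw [habs]
          have h5 : -Real.log L ≤ -Real.log d - Real.log (p i) := by linarith
          have g1 : -(d * Real.log d) ≤ 1 := by
            have := neg_abs_le (d * Real.log d)
            linarith [e2, abs_nonneg (d * Real.log d), neg_le_abs (d * Real.log d)]
          have g2 : d * (-Real.log (p i)) ≤ |Real.log (p i)| := by
            calc d * (-Real.log (p i)) ≤ d * |Real.log (p i)| :=
                  mul_le_mul_of_nonneg_left (neg_le_abs _) hd0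
            _ ≤ 1 * |Real.log (p i)| := mul_le_mul_of_nonneg_right hd1 (abs_nonneg _)
            _ = |Real.log (p i)| := one_mul _
          calc d * (-Real.log L) ≤ d * (-Real.log d - Real.log (p i)) :=
                mul_le_mul_of_nonneg_left h5 hd0
          _ = (-(d * Real.log d)) + d * (-Real.log (p i)) := by ring
          _ ≤ 1 + |Real.log (p i)| := by linarith
          _ = |Real.log (p i)| + 1 := by ring
        calc |d * Real.log d - d * Real.log L|
            ≤ |d * Real.log d| + |d * Real.log L| := e1
        _ ≤ 1 + (|Real.log (p i)| + 1) := by linarith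
        _ = C := by rw [hC]; ring
    rw [Real.norm_eq_abs]
    unfold fI
    calc |∑ j, cmap m y (j - i) * Real.log (cmap m y (j - i) / Lw m p j (cmap m y))|
        ≤ ∑ j, |cmap m y (j - i) * Real.log (cmap m y (j - i) / Lw m p j (cmap m y))| :=
          Finset.abs_sum_le_sum_abs _ _
    _ ≤ ∑ _j : Fin (m + 1), C := Finset.sum_le_sum fun j _ => hterm j
    _ = (m + 1 : ℝ) * C := by
        rw [Finset.sum_const, Finset.card_univ, Fintype.card_fin, nsmul_eq_mul]
        push_cast
        ring
  have hSmeas : MeasurableSet (Sset m) := measurableSet_Tset m 1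
  have hSfin : volume (Sset m) < ⊤ := (isCompact_Tset m 1).measure_lt_top
  refine Integrable.mono' (g := fun _ => (m + 1 : ℝ) * C)
    (integrableOn_const hSfin.ne)
    (measurable_fIc i).aestronglyMeasurable ?_
  rw [ae_restrict_iff' hSmeas]
  exact Filter.Eventually.of_forall hbound

lemma main_succ (m : ℕ) (p : Fin (m + 1) → ℝ) (hp : ∀ i, 0 ≤ p i) (hps : ∑ i, p i = 1) :
    ∑ i, p i * simplexIntegral (m + 1) (fun t =>
        ∑ j, t (j - i) * Real.log (t (j - i) / ∑ k, t (j - k) * p k))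
      = subF (m + 1) p := by
  have hSmeas : MeasurableSet (Sset m) := measurableSet_Tset m 1
  have IA : IntegrableOn (fun y => Afun m (cmap m y)) (Sset m) volume :=
    integrableOn_Tset ((continuous_finset_sum _ fun j _ =>
      Real.continuous_mul_log.comp (continuous_apply j)).comp continuous_cmap)
  have IL : ∀ j : Fin (m + 1), IntegrableOn
      (fun y => Lw m p j (cmap m y) * Real.log (Lw m p j (cmap m y))) (Sset m) volume :=
    fun j => integrableOn_Tset
      (Real.continuous_mul_log.comp ((continuous_Lw j).comp continuous_cmap))
  have IB : ∀ i : Fin (m + 1), IntegrableOn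
      (fun y => p i * ∑ j, cmap m y (j - i) * Real.log (Lw m p j (cmap m y)))
      (Sset m) volume := by
    intro i
    rcases (hp i).eq_or_lt with h | h
    · simp only [← h, zero_mul]
      exact integrableOn_zero
    · have hfi := integrableOn_fIc hp hps h
      have IB0 : IntegrableOn
          (fun y => ∑ j, cmap m y (j - i) * Real.log (Lw m p j (cmap m y)))
          (Sset m) volume := by
        refine IntegrableOn.congr_fun (IA.sub hfi) (fun y hy => ?_) hSmeas
        have h2 := fI_eq_sub hp h hy
        simp only [Pi.sub_apply]
        linarith
      exact IB0.const_mul _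
  have key1 : ∀ i : Fin (m + 1), p i * (∫ y in Sset m, fI m p i (cmap m y))
      = p i * (∫ y in Sset m, Afun m (cmap m y))
        - ∫ y in Sset m, p i * ∑ j, cmap m y (j - i) * Real.log (Lw m p j (cmap m y)) := by
    intro i
    rcases (hp i).eq_or_lt with h | h
    · rw [← h]; simp
    · have hfi := integrableOn_fIc hp hps h
      have IB0 : IntegrableOn
          (fun y => ∑ j, cmap m y (j - i) * Real.log (Lw m p j (cmap m y)))
          (Sset m) volume := by
        refine IntegrableOn.congr_fun (IA.sub hfi) (fun y hy => ?_) hSmeas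
        have h2 := fI_eq_sub hp h hy
        simp only [Pi.sub_apply]
        linarith
      have hEq : Set.EqOn (fun y => fI m p i (cmap m y))
          (fun y => Afun m (cmap m y)
            - ∑ j, cmap m y (j - i) * Real.log (Lw m p j (cmap m y))) (Sset m) :=
        fun y hy => fI_eq_sub hp h hy
      rw [setIntegral_congr_fun hSmeas hEq, integral_sub IA IB0, integral_const_mul]
      ring
  have key2 : ∑ i : Fin (m + 1),
        (∫ y in Sset m, p i * ∑ j, cmap m y (j - i) * Real.log (Lw m p j (cmap m y)))
      = ∑ j : Fin (m + 1),
        ∫ y in Sset m, Lw m p j (cmap m y) * Real.log (Lw m p j (cmap m y)) := by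
    rw [← integral_finset_sum _ (fun i _ => IB i),
      ← integral_finset_sum _ (fun j _ => IL j)]
    apply setIntegral_congr_fun hSmeas
    intro y _
    exact sum_B_eq (cmap m y)
  have key3 : ∫ y in Sset m, Afun m (cmap m y)
      = -((m + 1 : ℝ) * (harmC (m + 1) / (m + 1).factorial)) := by
    have hunf : (fun y : Fin m → ℝ => Afun m (cmap m y))
        = fun y => ∑ j, cmap m y j * Real.log (cmap m y j) := rfl
    have IC : ∀ j : Fin (m + 1), IntegrableOn
        (fun y : Fin m → ℝ => cmap m y j * Real.log (cmap m y j)) (Sset m) volume :=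
      fun j => integrableOn_Tset
        (Real.continuous_mul_log.comp ((continuous_apply j).comp continuous_cmap))
    rw [hunf, integral_finset_sum _ (fun j _ => IC j),
      Finset.sum_congr rfl fun j _ => coord_integral j, Finset.sum_const,
      Finset.card_univ, Fintype.card_fin, nsmul_eq_mul]
    push_cast
    ring
  have key4 : ∀ j : Fin (m + 1),
      (∫ y in Sset m, Lw m p j (cmap m y) * Real.log (Lw m p j (cmap m y)))
      = ∫ y in Sset m, (∑ k, p k * cmap m y k) * Real.log (∑ k, p k * cmap m y k) := by
    intro j
    have h := perm_inv (Equiv.subLeft j)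
      (fun x => (∑ k, x k * p k) * Real.log (∑ k, x k * p k))
    simp only [Equiv.subLeft_apply] at h
    have hL : (fun y : Fin m → ℝ => Lw m p j (cmap m y) * Real.log (Lw m p j (cmap m y)))
        = fun y => (∑ k, cmap m y (j - k) * p k) * Real.log (∑ k, cmap m y (j - k) * p k) :=
      rfl
    rw [hL, h]
    apply setIntegral_congr_fun hSmeas
    intro y _
    dsimp only
    rw [Finset.sum_congr rfl fun k _ => mul_comm (cmap m y k) (p k)]
  have hSi : ∀ f : (Fin (m + 1) → ℝ) → ℝ,
      simplexIntegral (m + 1) f = (m.factorial : ℝ) * ∫ y in Sset m, f (cmap m y) :=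
    fun f => rfl
  have hfIdef : ∀ i : Fin (m + 1), (fun y : Fin m → ℝ =>
      ∑ j, cmap m y (j - i) * Real.log (cmap m y (j - i) / ∑ k, cmap m y (j - k) * p k))
      = fun y => fI m p i (cmap m y) := fun i => rfl
  rw [subF]
  simp only [hSi, eta]
  simp only [hfIdef]
  rw [integral_neg]
  have hstep : ∑ i : Fin (m + 1), p i * ((m.factorial : ℝ) * ∫ y in Sset m, fI m p i (cmap m y))
      = (m.factorial : ℝ) * ∑ i : Fin (m + 1), p i * ∫ y in Sset m, fI m p i (cmap m y) := by
    rw [Finset.mul_sum]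
    exact Finset.sum_congr rfl fun i _ => by ring
  rw [hstep, Finset.sum_congr rfl fun i _ => key1 i, Finset.sum_sub_distrib,
    ← Finset.sum_mul, hps, one_mul, key2, Finset.sum_congr rfl fun j _ => key4 j,
    Finset.sum_const, Finset.card_univ, Fintype.card_fin, nsmul_eq_mul, key3]
  have hfac : ((m + 1).factorial : ℝ) = ((m : ℝ) + 1) * (m.factorial : ℝ) := by
    rw [Nat.factorial_succ]; push_cast; ring
  have hfacpos : (0 : ℝ) < (m + 1).factorial := by positivity
  rw [hfac] at *
  push_cast
  field_simp
  ring

end SubP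

/-- operational formula for classical subentropy: the uniform average over
cyclic stochastic maps of the mean Kullback–Leibler divergence Σ_i p_i D(Λ_t(δ_i) ‖ Λ_t(p))
equals the subentropy F(p). -/
theorem classical_subentropy_operational (n : ℕ) (hn : 1 ≤ n) (p : Fin n → ℝ)
    (hp : ∀ i, 0 ≤ p i) (hps : ∑ i, p i = 1) :
    ∑ i, p i * simplexIntegral n (fun t =>
        ∑ j, t (j - i) * Real.log (t (j - i) / ∑ k, t (j - k) * p k))
      = subF n p := by
  obtain ⟨m, rfl⟩ : ∃ m, n = m + 1 := ⟨n - 1, by omega⟩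
  exact SubP.main_succ m p hp hps
end
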